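/- arXiv:2006.03878 — 4 statements merged into one kernel-verified Lean document; each statement's English description precedes it below -/
import Mathlib

section
/- For complex numbers $z$ and $q$ with $|q|<1$, the infinite product $\prod_{i=1}^{\infty}(1+zq^i)$ equals the sum $\sum_{m=0}^{\infty} \frac{z^m q^{m(m+1)/2}}{(1-q)(1-q^2)\cdots(1-q^m)}$ (Euler's identity). -/
/-- `(q)ₙ = ∏_{k=1}^n (1 - q^k)` -/
noncomputable def qPoch (q : ℂ) (n : ℕ) : ℂ := ∏ k ∈ Finset.range n, (1 - q ^ (k + 1))

open Finset Filter Topology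

noncomputable def eulerTerm (q z : ℂ) (m : ℕ) : ℂ :=
  z ^ m * q ^ (m * (m + 1) / 2) / qPoch q m

lemma norm_factor_ge {q : ℂ} (hq : ‖q‖ < 1) (k : ℕ) : 1 - ‖q‖ ≤ ‖1 - q ^ (k + 1)‖ := by
  have h1 : ‖q ^ (k + 1)‖ ≤ ‖q‖ := by
    rw [norm_pow]
    exact pow_le_of_le_one (norm_nonneg q) hq.le (by omega)
  calc 1 - ‖q‖ = ‖(1 : ℂ)‖ - ‖q‖ := by rw [norm_one]
    _ ≤ ‖(1 : ℂ)‖ - ‖q ^ (k + 1)‖ := by linarith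
    _ ≤ ‖1 - q ^ (k + 1)‖ := norm_sub_norm_le _ _

lemma norm_qPoch_ge {q : ℂ} (hq : ‖q‖ < 1) (m : ℕ) : (1 - ‖q‖) ^ m ≤ ‖qPoch q m‖ := by
  rw [qPoch, norm_prod]
  calc (1 - ‖q‖) ^ m = ∏ _k ∈ Finset.range m, (1 - ‖q‖) := by
        rw [Finset.prod_const, Finset.card_range]
    _ ≤ ∏ k ∈ Finset.range m, ‖1 - q ^ (k + 1)‖ :=
        Finset.prod_le_prod (fun _ _ => by linarith [norm_nonneg q])
          (fun k _ => norm_factor_ge hq k)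

lemma qPoch_ne_zero {q : ℂ} (hq : ‖q‖ < 1) (m : ℕ) : qPoch q m ≠ 0 := by
  have h1 : (0 : ℝ) < (1 - ‖q‖) ^ m := pow_pos (by linarith [norm_nonneg q]) m
  have := norm_qPoch_ge hq m
  intro h
  rw [h, norm_zero] at this
  linarith

lemma tri_succ (m : ℕ) : (m + 1) * (m + 1 + 1) / 2 = m * (m + 1) / 2 + (m + 1) := by
  have h : (m + 1) * (m + 1 + 1) = m * (m + 1) + 2 * (m + 1) := by ring
  omega

lemma eulerTerm_succ (q z : ℂ) (m : ℕ) :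
    eulerTerm q z (m + 1) = eulerTerm q z m * (z * q ^ (m + 1)) / (1 - q ^ (m + 1)) := by
  unfold eulerTerm
  rw [qPoch, Finset.prod_range_succ, ← qPoch, tri_succ, pow_add, ← div_div]
  ring

lemma eulerTerm_zero (q z : ℂ) : eulerTerm q z 0 = 1 := by
  simp [eulerTerm, qPoch]

lemma summable_eulerTerm {q : ℂ} (hq : ‖q‖ < 1) (z : ℂ) : Summable (eulerTerm q z) := by
  have hd : (0 : ℝ) < 1 - ‖q‖ := by linarith [norm_nonneg q]
  apply summable_of_ratio_norm_eventually_le (r := 1 / 2) (by norm_num)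
  have h0 : Tendsto (fun m : ℕ => ‖z‖ * ‖q‖ ^ (m + 1) / (1 - ‖q‖)) atTop (𝓝 0) := by
    have h := tendsto_pow_atTop_nhds_zero_of_lt_one (norm_nonneg q) hq
    have h2 := ((h.comp (tendsto_add_atTop_nat 1)).const_mul ‖z‖).div_const (1 - ‖q‖)
    simpa using h2
  filter_upwards [h0.eventually_le_const (by norm_num : (0:ℝ) < 1/2)] with m hm
  have hd2 : (0 : ℝ) < ‖1 - q ^ (m + 1)‖ := lt_of_lt_of_le hd (norm_factor_ge hq m)
  have hB : ‖z * q ^ (m + 1)‖ / ‖1 - q ^ (m + 1)‖ ≤ 1 / 2 := by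
    calc ‖z * q ^ (m + 1)‖ / ‖1 - q ^ (m + 1)‖
        ≤ ‖z * q ^ (m + 1)‖ / (1 - ‖q‖) :=
          div_le_div_of_nonneg_left (norm_nonneg _) hd (norm_factor_ge hq m)
      _ = ‖z‖ * ‖q‖ ^ (m + 1) / (1 - ‖q‖) := by rw [norm_mul, norm_pow]
      _ ≤ 1 / 2 := hm
  calc ‖eulerTerm q z (m + 1)‖
      = ‖eulerTerm q z m‖ * (‖z * q ^ (m + 1)‖ / ‖1 - q ^ (m + 1)‖) := by
        rw [eulerTerm_succ, norm_div, norm_mul]; ring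
    _ ≤ ‖eulerTerm q z m‖ * (1 / 2) := by
        exact mul_le_mul_of_nonneg_left hB (norm_nonneg _)
    _ = 1 / 2 * ‖eulerTerm q z m‖ := by ring

lemma eulerTerm_norm_le {q : ℂ} (hq : ‖q‖ < 1) (z : ℂ) (m : ℕ) :
    ‖eulerTerm q z m‖ ≤ (‖z‖ * ‖q‖ / (1 - ‖q‖)) ^ m := by
  have hd : (0 : ℝ) < 1 - ‖q‖ := by linarith [norm_nonneg q]
  have hm : m ≤ m * (m + 1) / 2 := by
    rcases Nat.eq_zero_or_pos m with h | h
    · simp [h]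
    · have : m * 2 ≤ m * (m + 1) := Nat.mul_le_mul_left m (by omega)
      omega
  have h1 : ‖q‖ ^ (m * (m + 1) / 2) ≤ ‖q‖ ^ m :=
    pow_le_pow_of_le_one (norm_nonneg q) hq.le hm
  rw [eulerTerm, norm_div, norm_mul, norm_pow, norm_pow, div_pow, mul_pow]
  exact div_le_div₀ (by positivity)
    (mul_le_mul_of_nonneg_left h1 (by positivity))
    (pow_pos hd m) (norm_qPoch_ge hq m)

lemma funcEq {q : ℂ} (hq : ‖q‖ < 1) (z : ℂ) :
    (∑' m, eulerTerm q z m) = (1 + z * q) * ∑' m, eulerTerm q (z * q) m := by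
  have hsum : Summable (eulerTerm q (z * q)) := summable_eulerTerm hq (z * q)
  set h : ℕ → ℂ := fun m => match m with
    | 0 => 0
    | (n + 1) => z * q * eulerTerm q (z * q) n with hh
  have hshift : Summable fun n => h (n + 1) := by
    simpa [hh] using hsum.mul_left (z * q)
  have hsumh : Summable h := (summable_nat_add_iff 1).mp hshift
  have hkey : ∀ m, eulerTerm q z m = eulerTerm q (z * q) m + h m := by
    intro m
    match m with
    | 0 => simp [eulerTerm_zero, hh]
    | (n + 1) =>
      have hne : (1 - q ^ (n + 1)) ≠ 0 := by
        have := norm_factor_ge hq n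
        have hd : (0 : ℝ) < 1 - ‖q‖ := by linarith [norm_nonneg q]
        intro hc
        rw [hc, norm_zero] at this
        linarith
      have hpne : qPoch q n ≠ 0 := qPoch_ne_zero hq n
      show eulerTerm q z (n + 1) = eulerTerm q (z * q) (n + 1) + z * q * eulerTerm q (z * q) n
      rw [eulerTerm_succ q z n, eulerTerm_succ q (z * q) n]
      unfold eulerTerm
      field_simp
      ring
  calc (∑' m, eulerTerm q z m) = ∑' m, (eulerTerm q (z * q) m + h m) := by
        exact tsum_congr hkey
    _ = (∑' m, eulerTerm q (z * q) m) + ∑' m, h m := hsum.tsum_add hsumh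
    _ = (∑' m, eulerTerm q (z * q) m) + (h 0 + ∑' n, h (n + 1)) := by
        rw [hsumh.tsum_eq_zero_add]
    _ = (∑' m, eulerTerm q (z * q) m) + z * q * ∑' n, eulerTerm q (z * q) n := by
        simp only [hh]
        rw [tsum_mul_left]
        ring_nf
    _ = (1 + z * q) * ∑' m, eulerTerm q (z * q) m := by ring

lemma iterateEq {q : ℂ} (hq : ‖q‖ < 1) (z : ℂ) (n : ℕ) :
    (∑' m, eulerTerm q z m) =
      (∏ i ∈ Finset.range n, (1 + z * q ^ (i + 1))) * ∑' m, eulerTerm q (z * q ^ n) m := by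
  induction n with
  | zero => simp
  | succ n ih =>
    rw [ih, Finset.prod_range_succ, funcEq hq (z * q ^ n)]
    have : z * q ^ n * q = z * q ^ (n + 1) := by rw [pow_succ]; ring
    rw [this]
    ring

lemma tail_bound {q : ℂ} (hq : ‖q‖ < 1) (z : ℂ)
    (hr : ‖z‖ * ‖q‖ / (1 - ‖q‖) ≤ 1 / 2) :
    ‖(∑' m, eulerTerm q z m) - 1‖ ≤ 2 * (‖z‖ * ‖q‖ / (1 - ‖q‖)) := by
  have hd : (0 : ℝ) < 1 - ‖q‖ := by linarith [norm_nonneg q]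
  set r : ℝ := ‖z‖ * ‖q‖ / (1 - ‖q‖) with hrdef
  have hr0 : 0 ≤ r := by positivity
  have hr1 : r < 1 := by linarith
  have hsum := summable_eulerTerm hq z
  rw [hsum.tsum_eq_zero_add, eulerTerm_zero, add_sub_cancel_left]
  have hgeo : Summable (fun n : ℕ => r ^ (n + 1)) := by
    apply ((summable_geometric_of_lt_one hr0 hr1).mul_left r).congr
    intro n
    rw [pow_succ]
    ring
  have hb : ∀ n : ℕ, ‖eulerTerm q z (n + 1)‖ ≤ r ^ (n + 1) := fun n =>
    eulerTerm_norm_le hq z (n + 1)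
  calc ‖∑' n, eulerTerm q z (n + 1)‖ ≤ ∑' n : ℕ, r ^ (n + 1) :=
        tsum_of_norm_bounded hgeo.hasSum hb
    _ = r * ∑' n : ℕ, r ^ n := by
        rw [← tsum_mul_left]
        exact tsum_congr fun n => by rw [pow_succ]; ring
    _ = r * (1 - r)⁻¹ := by rw [tsum_geometric_of_lt_one hr0 hr1]
    _ ≤ r * 2 := by
        apply mul_le_mul_of_nonneg_left _ hr0
        rw [inv_le_comm₀ (by linarith) (by norm_num)]
        linarith
    _ = 2 * r := by ring

lemma tendsto_tail {q : ℂ} (hq : ‖q‖ < 1) (z : ℂ) :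
    Tendsto (fun n : ℕ => ∑' m, eulerTerm q (z * q ^ n) m) atTop (𝓝 1) := by
  have hd : (0 : ℝ) < 1 - ‖q‖ := by linarith [norm_nonneg q]
  rw [← tendsto_sub_nhds_zero_iff]
  have hto : Tendsto (fun n : ℕ => ‖z‖ * ‖q‖ ^ n * ‖q‖ / (1 - ‖q‖)) atTop (𝓝 0) := by
    have h := tendsto_pow_atTop_nhds_zero_of_lt_one (norm_nonneg q) hq
    have h2 := ((h.const_mul ‖z‖).mul_const ‖q‖).div_const (1 - ‖q‖)
    simpa using h2
  have hto2 : Tendsto (fun n : ℕ => 2 * (‖z‖ * ‖q‖ ^ n * ‖q‖ / (1 - ‖q‖))) atTop (𝓝 0) := by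
    simpa using hto.const_mul 2
  apply squeeze_zero_norm' _ hto2
  filter_upwards [hto.eventually_le_const (by norm_num : (0:ℝ) < 1/2)] with n hn
  have hnorm : ‖z * q ^ n‖ * ‖q‖ / (1 - ‖q‖) = ‖z‖ * ‖q‖ ^ n * ‖q‖ / (1 - ‖q‖) := by
    rw [norm_mul, norm_pow]
  have := tail_bound hq (z * q ^ n) (by rw [hnorm]; exact hn)
  rw [hnorm] at this
  exact this

lemma multipliable_factor {q : ℂ} (hq : ‖q‖ < 1) (z : ℂ) :
    Multipliable (fun i : ℕ => 1 + z * q ^ (i + 1)) := by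
  by_cases hzero : ∃ i : ℕ, 1 + z * q ^ (i + 1) = 0
  · obtain ⟨i0, hi0⟩ := hzero
    refine ⟨0, ?_⟩
    rw [HasProd]
    have hev : ∀ᶠ s : Finset ℕ in atTop, ∏ i ∈ s, (1 + z * q ^ (i + 1)) = 0 := by
      filter_upwards [eventually_ge_atTop ({i0} : Finset ℕ)] with s hs
      exact Finset.prod_eq_zero (hs (Finset.mem_singleton_self i0)) hi0
    exact Tendsto.congr' (hev.mono fun s h => h.symm) tendsto_const_nhds
  · push_neg at hzero
    have hlog : Summable (fun n : ℕ => Complex.log (1 + z * q ^ (n + 1))) := by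
      apply Summable.of_norm_bounded_eventually_nat
        (g := fun n => 3 / 2 * (‖z‖ * ‖q‖ ^ (n + 1)))
      · apply Summable.mul_left
        apply Summable.mul_left
        exact ((summable_geometric_of_lt_one (norm_nonneg q) hq).comp_injective
          (add_left_injective 1))
      · have hto : Tendsto (fun n : ℕ => ‖z‖ * ‖q‖ ^ (n + 1)) atTop (𝓝 0) := by
          have h := tendsto_pow_atTop_nhds_zero_of_lt_one (norm_nonneg q) hq
          simpa using (h.comp (tendsto_add_atTop_nat 1)).const_mul ‖z‖
        filter_upwards [hto.eventually_le_const (by norm_num : (0:ℝ) < 1/2)] with n hn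
        have h1 : ‖z * q ^ (n + 1)‖ ≤ 1 / 2 := by
          rw [norm_mul, norm_pow]; exact hn
        calc ‖Complex.log (1 + z * q ^ (n + 1))‖ ≤ 3 / 2 * ‖z * q ^ (n + 1)‖ :=
              Complex.norm_log_one_add_half_le_self h1
          _ = 3 / 2 * (‖z‖ * ‖q‖ ^ (n + 1)) := by rw [norm_mul, norm_pow]
    exact Complex.multipliable_of_summable_log hlog

/-- Euler's identity: `∏_{i≥1} (1+zqⁱ) = ∑_{m≥0} z^m q^{m(m+1)/2}/(q)_m`. -/
theorem euler_identity (z q : ℂ) (hq : ‖q‖ < 1) :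
    ∏' i : ℕ, (1 + z * q ^ (i + 1)) =
      ∑' m : ℕ, z ^ m * q ^ (m * (m + 1) / 2) / qPoch q m := by
  have hmul := multipliable_factor hq z
  have h1 := hmul.hasProd.tendsto_prod_nat
  have h2 : Tendsto
      (fun n : ℕ => (∏ i ∈ Finset.range n, (1 + z * q ^ (i + 1))) *
        ∑' m, eulerTerm q (z * q ^ n) m) atTop
      (𝓝 ((∏' i : ℕ, (1 + z * q ^ (i + 1))) * 1)) :=
    h1.mul (tendsto_tail hq z)
  have h3 : (fun n : ℕ => (∏ i ∈ Finset.range n, (1 + z * q ^ (i + 1))) *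
      ∑' m, eulerTerm q (z * q ^ n) m) = fun _ => ∑' m, eulerTerm q z m :=
    funext fun n => (iterateEq hq z n).symm
  rw [h3] at h2
  have := tendsto_nhds_unique h2 tendsto_const_nhds
  rw [mul_one] at this
  rw [this]
  rfl
end

section
/- (Jacobi triple product identity) For complex $z \ne 0$ and $|q| < 1$, $\prod_{n=0}^{\infty}(1+zq^{n+1})(1+z^{-1}q^n)(1-q^{n+1}) = \sum_{n=-\infty}^{\infty} z^n q^{(n^2+n)/2}$. -/
open Finset Filter Topology

lemma my_norm_prod_one_add_sub_one_le (f : ℕ → ℂ) (s : Finset ℕ) :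
    ‖∏ i ∈ s, (1 + f i) - 1‖ ≤ ∏ i ∈ s, (1 + ‖f i‖) - 1 := by
  induction s using Finset.cons_induction with
  | empty => simp
  | cons a s ha ih =>
    rw [Finset.prod_cons, Finset.prod_cons]
    have hp : (1:ℝ) ≤ ∏ i ∈ s, (1 + ‖f i‖) := by
      have := Finset.prod_le_prod (s := s) (f := fun _ => (1:ℝ))
        (g := fun i => 1 + ‖f i‖) (fun i _ => zero_le_one) (fun i _ => by linarith [norm_nonneg (f i)])
      simpa using this
    have h1 : (1 + f a) * ∏ i ∈ s, (1 + f i) - 1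
        = (1 + f a) * (∏ i ∈ s, (1 + f i) - 1) + f a := by ring
    rw [h1]
    have h3 : ‖1 + f a‖ ≤ 1 + ‖f a‖ := (norm_add_le _ _).trans (by simp)
    have h2 : ‖(1 + f a) * (∏ i ∈ s, (1 + f i) - 1)‖
        ≤ (1 + ‖f a‖) * (∏ i ∈ s, (1 + ‖f i‖) - 1) := by
      rw [norm_mul]
      exact mul_le_mul h3 ih (norm_nonneg _) (by positivity)
    have := (norm_add_le ((1 + f a) * (∏ i ∈ s, (1 + f i) - 1)) (f a)).trans
      (add_le_add h2 le_rfl)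
    refine this.trans ?_
    nlinarith [norm_nonneg (f a)]

lemma my_prod_one_add_le_exp (f : ℕ → ℂ) (s : Finset ℕ) :
    ∏ i ∈ s, (1 + ‖f i‖) ≤ Real.exp (∑ i ∈ s, ‖f i‖) := by
  rw [Real.exp_sum]
  exact Finset.prod_le_prod (fun i _ => by positivity)
    (fun i _ => by rw [add_comm]; exact Real.add_one_le_exp _)

lemma my_multipliable_one_add (f : ℕ → ℂ) (hf : Summable fun n => ‖f n‖) :
    Multipliable fun n => 1 + f n := by
  set T := ∑' n, ‖f n‖ with hT
  have hT0 : 0 ≤ T := tsum_nonneg fun n => norm_nonneg _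
  have hbnd : ∀ s : Finset ℕ, ‖∏ i ∈ s, (1 + f i)‖ ≤ Real.exp T := by
    intro s
    calc ‖∏ i ∈ s, (1 + f i)‖ ≤ ∏ i ∈ s, ‖1 + f i‖ := norm_prod_le _ _
      _ ≤ ∏ i ∈ s, (1 + ‖f i‖) :=
          Finset.prod_le_prod (fun i _ => norm_nonneg _)
            (fun i _ => (norm_add_le _ _).trans (by simp))
      _ ≤ Real.exp (∑ i ∈ s, ‖f i‖) := my_prod_one_add_le_exp f s
      _ ≤ Real.exp T := Real.exp_le_exp.2 (Summable.sum_le_tsum s (fun i _ => norm_nonneg _) hf)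
  have hcauchy : CauchySeq (fun s : Finset ℕ => ∏ i ∈ s, (1 + f i)) := by
    rw [Metric.cauchySeq_iff']
    intro ε hε
    set δ := Real.log (1 + ε * Real.exp (-T)) with hδ
    have h1pos : (0:ℝ) < 1 + ε * Real.exp (-T) := by positivity
    have hδ0 : 0 < δ := Real.log_pos (by nlinarith [Real.exp_pos (-T)])
    obtain ⟨s₀, hs₀⟩ := (summable_iff_vanishing.1 hf) (Metric.ball 0 δ)
      (Metric.ball_mem_nhds 0 hδ0)
    refine ⟨s₀, fun t ht => ?_⟩
    have hsub : s₀ ⊆ t := ht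
    have key : ∏ i ∈ t, (1 + f i) - ∏ i ∈ s₀, (1 + f i)
        = (∏ i ∈ s₀, (1 + f i)) * (∏ i ∈ t \ s₀, (1 + f i) - 1) := by
      rw [mul_sub, mul_one, mul_comm, Finset.prod_sdiff hsub]
    rw [dist_eq_norm, key, norm_mul]
    have hsum : ∑ i ∈ t \ s₀, ‖f i‖ < δ := by
      have hd : Disjoint (t \ s₀) s₀ := Finset.sdiff_disjoint
      have := hs₀ (t \ s₀) hd
      rw [Metric.mem_ball, dist_zero_right, Real.norm_eq_abs] at this
      exact (le_abs_self _).trans_lt this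
    have h4 : ‖∏ i ∈ t \ s₀, (1 + f i) - 1‖ < Real.exp δ - 1 := by
      refine (my_norm_prod_one_add_sub_one_le f _).trans_lt ?_
      have := my_prod_one_add_le_exp f (t \ s₀)
      have h5 : Real.exp (∑ i ∈ t \ s₀, ‖f i‖) < Real.exp δ := Real.exp_lt_exp.2 hsum
      linarith
    have h6 : Real.exp δ - 1 = ε * Real.exp (-T) := by
      rw [hδ, Real.exp_log h1pos]; ring
    calc ‖∏ i ∈ s₀, (1 + f i)‖ * ‖∏ i ∈ t \ s₀, (1 + f i) - 1‖
        ≤ Real.exp T * ‖∏ i ∈ t \ s₀, (1 + f i) - 1‖ := by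
          exact mul_le_mul_of_nonneg_right (hbnd s₀) (norm_nonneg _)
      _ < Real.exp T * (Real.exp δ - 1) := by
          exact mul_lt_mul_of_pos_left h4 (Real.exp_pos T)
      _ = ε := by rw [h6, ← mul_assoc, mul_comm (Real.exp T) ε, mul_assoc,
          ← Real.exp_add]; simp
  obtain ⟨a, ha⟩ := cauchySeq_tendsto_of_complete hcauchy
  exact ⟨a, ha⟩

open Finset Filter Topology

noncomputable def jtpF (q : ℂ) (k : ℕ) : ℂ := ∏ j ∈ Finset.range k, (1 - q ^ (j + 1))

def jtpT : ℕ → ℕ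
  | 0 => 0
  | k + 1 => jtpT k + k

noncomputable def jtpGB (q : ℂ) (n k : ℕ) : ℂ := jtpF q n / (jtpF q k * jtpF q (n - k))

lemma jtpF_zero (q : ℂ) : jtpF q 0 = 1 := by simp [jtpF]

lemma jtpF_succ (q : ℂ) (k : ℕ) : jtpF q (k + 1) = jtpF q k * (1 - q ^ (k + 1)) := by
  rw [jtpF, Finset.prod_range_succ]; rfl

lemma jtpF_ne_zero {q : ℂ} (h1 : ∀ j : ℕ, 1 - q ^ (j + 1) ≠ 0) (k : ℕ) : jtpF q k ≠ 0 :=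
  Finset.prod_ne_zero_iff.2 fun j _ => h1 j

lemma jtpGB_zero {q : ℂ} (h1 : ∀ j : ℕ, 1 - q ^ (j + 1) ≠ 0) (n : ℕ) : jtpGB q n 0 = 1 := by
  rw [jtpGB, jtpF_zero]
  simp [Nat.sub_zero, div_self (jtpF_ne_zero h1 n)]

lemma jtpGB_self {q : ℂ} (h1 : ∀ j : ℕ, 1 - q ^ (j + 1) ≠ 0) (n : ℕ) : jtpGB q n n = 1 := by
  rw [jtpGB, Nat.sub_self, jtpF_zero]
  simp [div_self (jtpF_ne_zero h1 n)]

lemma jtpGB_pascal {q : ℂ} (h1 : ∀ j : ℕ, 1 - q ^ (j + 1) ≠ 0) {k n : ℕ} (hkn : k < n) :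
    jtpGB q (n + 1) (k + 1) = q ^ (k + 1) * jtpGB q n (k + 1) + jtpGB q n k := by
  obtain ⟨m, rfl⟩ : ∃ m, n = k + m + 1 := ⟨n - k - 1, by omega⟩
  unfold jtpGB
  have e1 : k + m + 1 + 1 - (k + 1) = m + 1 := by omega
  have e2 : k + m + 1 - (k + 1) = m := by omega
  have e3 : k + m + 1 - k = m + 1 := by omega
  rw [e1, e2, e3]
  rw [show k + m + 1 + 1 = (k + m + 1) + 1 from rfl, jtpF_succ q (k + m + 1),
    jtpF_succ q k, jtpF_succ q m]
  have hFk := jtpF_ne_zero h1 k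
  have hFm := jtpF_ne_zero h1 m
  have hFn := jtpF_ne_zero h1 (k + m + 1)
  have h2 := h1 k
  have h3 := h1 m
  field_simp
  ring

lemma jtp_qbinom {q : ℂ} (h1 : ∀ j : ℕ, 1 - q ^ (j + 1) ≠ 0) :
    ∀ (n : ℕ) (t : ℂ), ∏ j ∈ Finset.range n, (1 + t * q ^ j)
      = ∑ k ∈ Finset.range (n + 1), jtpGB q n k * q ^ (jtpT k) * t ^ k := by
  intro n
  induction n with
  | zero => intro t; simp [jtpGB, jtpF, jtpT]
  | succ n ih =>
    intro t
    rw [Finset.prod_range_succ']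
    have hre : ∏ i ∈ Finset.range n, (1 + t * q ^ (i + 1))
        = ∏ i ∈ Finset.range n, (1 + (t * q) * q ^ i) :=
      Finset.prod_congr rfl fun i _ => by ring
    rw [hre, ih (t * q)]
    rw [Finset.sum_mul]
    have step1 : ∀ k ∈ Finset.range (n + 1),
        jtpGB q n k * q ^ (jtpT k) * (t * q) ^ k * (1 + t * q ^ 0)
        = jtpGB q n k * q ^ (jtpT k + k) * t ^ k
          + jtpGB q n k * q ^ (jtpT k + k) * t ^ (k + 1) := fun k _ => by ring
    rw [Finset.sum_congr rfl step1, Finset.sum_add_distrib]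
    rw [Finset.sum_range_succ' (fun k => jtpGB q n k * q ^ (jtpT k + k) * t ^ k) n]
    rw [Finset.sum_range_succ (fun k => jtpGB q n k * q ^ (jtpT k + k) * t ^ (k + 1)) n]
    rw [Finset.sum_range_succ' (fun k => jtpGB q (n + 1) k * q ^ (jtpT k) * t ^ k) (n + 1)]
    rw [Finset.sum_range_succ (fun k => jtpGB q (n + 1) (k + 1) * q ^ (jtpT (k + 1)) * t ^ (k + 1)) n]
    have hmid : (∑ k ∈ Finset.range n, jtpGB q n (k + 1) * q ^ (jtpT (k + 1) + (k + 1)) * t ^ (k + 1))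
        + (∑ k ∈ Finset.range n, jtpGB q n k * q ^ (jtpT k + k) * t ^ (k + 1))
        = ∑ k ∈ Finset.range n, jtpGB q (n + 1) (k + 1) * q ^ (jtpT (k + 1)) * t ^ (k + 1) := by
      rw [← Finset.sum_add_distrib]
      refine Finset.sum_congr rfl fun k hk => ?_
      have hkn : k < n := Finset.mem_range.1 hk
      rw [jtpGB_pascal h1 hkn]
      have : jtpT (k + 1) = jtpT k + k := rfl
      rw [this]
      ring
    have hb1 : jtpGB q n 0 = 1 := jtpGB_zero h1 n
    have hb2 : jtpGB q (n + 1) 0 = 1 := jtpGB_zero h1 (n + 1)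
    have hb3 : jtpGB q (n + 1) (n + 1) = 1 := jtpGB_self h1 (n + 1)
    have hb4 : jtpGB q n n = 1 := jtpGB_self h1 n
    have hb5 : jtpT (n + 1) = jtpT n + n := rfl
    rw [hb1, hb2, hb3, hb4, hb5]
    linear_combination hmid

lemma jtpT_cast (n : ℕ) : 2 * (jtpT n : ℤ) + n = (n : ℤ) * n := by
  induction n with
  | zero => simp [jtpT]
  | succ n ih =>
    have h : jtpT (n + 1) = jtpT n + n := rfl
    rw [h]
    push_cast
    push_cast at ih
    linarith

lemma jtp_half (a : ℤ) : 2 * ((a ^ 2 + a) / 2) = a ^ 2 + a := by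
  have h : (2 : ℤ) ∣ a ^ 2 + a := by
    obtain ⟨c, hc⟩ := Int.even_mul_succ_self a
    exact ⟨c, by linear_combination hc⟩
  exact Int.mul_ediv_cancel' h

lemma jtp_zpow_prod {q : ℂ} (hq0 : q ≠ 0) (N : ℕ) (a : ℕ → ℤ) :
    ∏ i ∈ Finset.range N, q ^ (a i) = q ^ (∑ i ∈ Finset.range N, a i) := by
  induction N with
  | zero => simp
  | succ n ih => rw [Finset.prod_range_succ, Finset.sum_range_succ, ih, zpow_add₀ hq0]

lemma jtp_sum_id (N : ℕ) : 2 * ∑ i ∈ Finset.range N, (i : ℤ) = N * N - N := by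
  induction N with
  | zero => simp
  | succ n ih =>
    rw [Finset.sum_range_succ, mul_add, ih]
    push_cast
    ring

lemma jtp_sum_shift (N : ℕ) : ∑ i ∈ Finset.range N, ((i : ℤ) + 1 - N) = -(jtpT N) := by
  refine mul_left_cancel₀ (two_ne_zero (α := ℤ)) ?_
  have h1 : ∑ i ∈ Finset.range N, ((i : ℤ) + 1 - N)
      = (∑ i ∈ Finset.range N, (i : ℤ)) + N * (1 - (N : ℤ)) := by
    calc ∑ i ∈ Finset.range N, ((i : ℤ) + 1 - N)
        = ∑ i ∈ Finset.range N, ((i : ℤ) + (1 - N)) :=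
          Finset.sum_congr rfl fun i _ => by ring
      _ = (∑ i ∈ Finset.range N, (i : ℤ)) + (Finset.range N).card • (1 - (N : ℤ)) := by
          rw [Finset.sum_add_distrib, Finset.sum_const]
      _ = (∑ i ∈ Finset.range N, (i : ℤ)) + N * (1 - (N : ℤ)) := by
          rw [Finset.card_range, nsmul_eq_mul]
  rw [h1]
  linear_combination jtp_sum_id N + jtpT_cast N

lemma jtp_exp (N k : ℕ) :
    (jtpT N : ℤ) + ((1 - (N : ℤ)) * k + jtpT k) = (((k : ℤ) - N) ^ 2 + ((k : ℤ) - N)) / 2 := by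
  refine mul_left_cancel₀ (two_ne_zero (α := ℤ)) ?_
  rw [jtp_half]
  linear_combination jtpT_cast N + jtpT_cast k

lemma jtp_finite {q z : ℂ} (h1 : ∀ j : ℕ, 1 - q ^ (j + 1) ≠ 0) (hq0 : q ≠ 0) (hz : z ≠ 0)
    (N : ℕ) :
    ∏ j ∈ Finset.range N, ((1 + z * q ^ (j + 1)) * (1 + z⁻¹ * q ^ j))
      = ∑ k ∈ Finset.range (2 * N + 1), jtpGB q (2 * N) k * z ^ ((k : ℤ) - N)
          * q ^ ((((k : ℤ) - N) ^ 2 + ((k : ℤ) - N)) / 2) := by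
  have key := jtp_qbinom h1 (2 * N) (z * q ^ ((1 : ℤ) - N))
  rw [show 2 * N = N + N from by ring] at key
  rw [Finset.prod_range_add (fun i => 1 + z * q ^ ((1 : ℤ) - N) * q ^ i) N N] at key
  have h2nd : ∀ i ∈ Finset.range N,
      (1 + z * q ^ ((1 : ℤ) - N) * q ^ (N + i)) = 1 + z * q ^ (i + 1) := by
    intro i _
    congr 1
    rw [mul_assoc, ← zpow_natCast q (N + i), ← zpow_add₀ hq0, ← zpow_natCast q (i + 1)]
    congr 1
    push_cast; ring
  have h1st : ∀ i ∈ Finset.range N,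
      (1 + z * q ^ ((1 : ℤ) - N) * q ^ i)
        = (z * q ^ ((i : ℤ) + 1 - N)) * (1 + z⁻¹ * q ^ (N - 1 - i)) := by
    intro i hi
    have hiN : i < N := Finset.mem_range.1 hi
    have e1 : z * q ^ ((1 : ℤ) - N) * q ^ i = z * q ^ ((i : ℤ) + 1 - N) := by
      rw [mul_assoc, ← zpow_natCast q i, ← zpow_add₀ hq0]
      congr 2
      ring
    have e2 : (z * q ^ ((i : ℤ) + 1 - N)) * (z⁻¹ * q ^ (N - 1 - i)) = 1 := by
      rw [← zpow_natCast q (N - 1 - i)]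
      have hc : ((N - 1 - i : ℕ) : ℤ) = (N : ℤ) - 1 - i := by omega
      rw [hc]
      rw [show (z * q ^ ((i : ℤ) + 1 - N)) * (z⁻¹ * q ^ ((N : ℤ) - 1 - i))
          = (z * z⁻¹) * (q ^ ((i : ℤ) + 1 - N) * q ^ ((N : ℤ) - 1 - i)) from by ring]
      rw [mul_inv_cancel₀ hz, ← zpow_add₀ hq0, one_mul,
        show (i : ℤ) + 1 - N + ((N : ℤ) - 1 - i) = 0 from by ring, zpow_zero]
    calc 1 + z * q ^ ((1 : ℤ) - N) * q ^ i = 1 + z * q ^ ((i : ℤ) + 1 - N) := by rw [e1]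
      _ = (z * q ^ ((i : ℤ) + 1 - N)) * (1 + z⁻¹ * q ^ (N - 1 - i)) := by
          rw [mul_add, mul_one, e2, add_comm]
  rw [Finset.prod_congr rfl h2nd, Finset.prod_congr rfl h1st, Finset.prod_mul_distrib,
    Finset.prod_mul_distrib, Finset.prod_const, Finset.card_range] at key
  rw [Finset.prod_range_reflect (fun j => 1 + z⁻¹ * q ^ j) N] at key
  rw [jtp_zpow_prod hq0 N (fun i => (i : ℤ) + 1 - N), jtp_sum_shift N] at key
  -- key : z ^ N * q ^ (-(jtpT N):ℤ) * ∏ (1 + z⁻¹ q^j) * ∏ (1 + z q^(i+1)) = ∑ ...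
  have lhs_eq : ∏ j ∈ Finset.range N, ((1 + z * q ^ (j + 1)) * (1 + z⁻¹ * q ^ j))
      = (∏ j ∈ Finset.range N, (1 + z * q ^ (j + 1)))
        * ∏ j ∈ Finset.range N, (1 + z⁻¹ * q ^ j) := Finset.prod_mul_distrib
  have hzN : (z : ℂ) ^ N ≠ 0 := pow_ne_zero _ hz
  have hqT : q ^ (-(jtpT N : ℤ)) ≠ 0 := zpow_ne_zero _ hq0
  have key2 : (∏ j ∈ Finset.range N, (1 + z * q ^ (j + 1)))
      * ∏ j ∈ Finset.range N, (1 + z⁻¹ * q ^ j)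
      = (z ^ N * q ^ (-(jtpT N : ℤ)))⁻¹
        * ∑ k ∈ Finset.range (2 * N + 1),
            jtpGB q (2 * N) k * q ^ (jtpT k) * (z * q ^ ((1 : ℤ) - N)) ^ k := by
    rw [show 2 * N = N + N from by ring]
    rw [eq_inv_mul_iff_mul_eq₀ (mul_ne_zero hzN hqT)]
    rw [← key]
    ring
  rw [lhs_eq, key2, Finset.mul_sum]
  refine Finset.sum_congr rfl fun k _ => ?_
  -- termwise
  rw [mul_pow z (q ^ ((1 : ℤ) - N)) k, ← zpow_natCast (q ^ ((1 : ℤ) - N)) k, ← zpow_mul,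
    mul_inv]
  have hq1 : (q ^ (-(jtpT N : ℤ)))⁻¹ = q ^ ((jtpT N : ℤ)) := by
    rw [← zpow_neg, neg_neg]
  have hz1 : (z ^ N)⁻¹ = z ^ (-(N : ℤ)) := by rw [← zpow_natCast z N, ← zpow_neg]
  have hz2 : z ^ k = z ^ ((k : ℤ)) := (zpow_natCast z k).symm
  have hq2 : q ^ (jtpT k) = q ^ ((jtpT k : ℤ)) := (zpow_natCast q (jtpT k)).symm
  rw [hq1, hz1, hz2, hq2]
  rw [show z ^ (-(N : ℤ)) * q ^ ((jtpT N : ℤ))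
      * (jtpGB q (2 * N) k * q ^ ((jtpT k : ℤ)) * (z ^ ((k : ℤ)) * q ^ (((1 : ℤ) - N) * k)))
      = jtpGB q (2 * N) k * (z ^ (-(N : ℤ)) * z ^ ((k : ℤ)))
        * (q ^ ((jtpT N : ℤ)) * (q ^ (((1 : ℤ) - N) * k) * q ^ ((jtpT k : ℤ)))) from by ring]
  rw [← zpow_add₀ hz, ← zpow_add₀ hq0, ← zpow_add₀ hq0]
  rw [show -(N : ℤ) + (k : ℤ) = (k : ℤ) - N from by ring, jtp_exp N k]

lemma jtp_e_succ (a : ℤ) : ((a + 1) ^ 2 + (a + 1)) / 2 = (a ^ 2 + a) / 2 + (a + 1) := by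
  refine mul_left_cancel₀ (two_ne_zero (α := ℤ)) ?_
  rw [mul_add, jtp_half, jtp_half]; ring

lemma jtp_e_pred (a : ℤ) : ((a - 1) ^ 2 + (a - 1)) / 2 = (a ^ 2 + a) / 2 - a := by
  refine mul_left_cancel₀ (two_ne_zero (α := ℤ)) ?_
  rw [mul_sub, jtp_half, jtp_half]; ring

lemma jtp_w_succ {z q : ℂ} (hz : z ≠ 0) (hq0 : q ≠ 0) (m : ℤ) :
    z ^ (m + 1) * q ^ (((m + 1) ^ 2 + (m + 1)) / 2)
      = (z ^ m * q ^ ((m ^ 2 + m) / 2)) * (z * q ^ (m + 1)) := by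
  rw [jtp_e_succ, zpow_add₀ hq0, zpow_add₀ hz, zpow_one]; ring

lemma jtp_w_pred {z q : ℂ} (hz : z ≠ 0) (hq0 : q ≠ 0) (m : ℤ) :
    z ^ (m - 1) * q ^ (((m - 1) ^ 2 + (m - 1)) / 2)
      = (z ^ m * q ^ ((m ^ 2 + m) / 2)) * (z⁻¹ * q ^ (-m)) := by
  rw [jtp_e_pred, zpow_sub₀ hq0, zpow_sub₀ hz, zpow_one]
  field_simp
  rw [← zpow_add₀ hq0, add_neg_cancel, zpow_zero]

lemma jtp_theta_summable {z q : ℂ} (hz : z ≠ 0) (hq0 : q ≠ 0) (hq : ‖q‖ < 1) :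
    Summable fun m : ℤ => ‖z ^ m * q ^ ((m ^ 2 + m) / 2)‖ := by
  have hne : ∀ m : ℤ, z ^ m * q ^ ((m ^ 2 + m) / 2) ≠ 0 := fun m =>
    mul_ne_zero (zpow_ne_zero _ hz) (zpow_ne_zero _ hq0)
  have hgeo : Tendsto (fun n : ℕ => ‖q‖ ^ n) atTop (𝓝 0) :=
    tendsto_pow_atTop_nhds_zero_of_lt_one (norm_nonneg q) hq
  apply Summable.of_nat_of_neg
  · apply summable_of_ratio_test_tendsto_lt_one (l := 0) zero_lt_one
      (Filter.Eventually.of_forall fun n => by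
        simpa using norm_ne_zero_iff.2 (hne n))
    have hrat : ∀ n : ℕ,
        ‖‖z ^ ((n + 1 : ℕ) : ℤ) * q ^ ((((n + 1 : ℕ) : ℤ) ^ 2 + ((n + 1 : ℕ) : ℤ)) / 2)‖‖
          / ‖‖z ^ ((n : ℤ)) * q ^ (((n : ℤ) ^ 2 + (n : ℤ)) / 2)‖‖
        = (‖z‖ * ‖q‖) * ‖q‖ ^ n := by
      intro n
      rw [Real.norm_of_nonneg (norm_nonneg _), Real.norm_of_nonneg (norm_nonneg _)]
      rw [show ((n + 1 : ℕ) : ℤ) = (n : ℤ) + 1 from by push_cast; ring]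
      rw [jtp_w_succ hz hq0, norm_mul, mul_comm, mul_div_assoc,
        div_self (norm_ne_zero_iff.2 (hne n)), mul_one]
      rw [norm_mul, norm_zpow,
        show ((n : ℤ) + 1) = ((n + 1 : ℕ) : ℤ) from by push_cast; ring, zpow_natCast,
        pow_succ]
      ring
    refine Tendsto.congr (fun n => (hrat n).symm) ?_
    have := hgeo.const_mul (‖z‖ * ‖q‖)
    simpa using this
  · apply summable_of_ratio_test_tendsto_lt_one (l := 0) zero_lt_one
      (Filter.Eventually.of_forall fun n => by
        simpa using norm_ne_zero_iff.2 (hne (-n)))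
    have hrat : ∀ n : ℕ,
        ‖‖z ^ (-((n + 1 : ℕ) : ℤ)) * q ^ (((-((n + 1 : ℕ) : ℤ)) ^ 2 + (-((n + 1 : ℕ) : ℤ))) / 2)‖‖
          / ‖‖z ^ (-(n : ℤ)) * q ^ (((-(n : ℤ)) ^ 2 + (-(n : ℤ))) / 2)‖‖
        = ‖z⁻¹‖ * ‖q‖ ^ n := by
      intro n
      rw [Real.norm_of_nonneg (norm_nonneg _), Real.norm_of_nonneg (norm_nonneg _)]
      rw [show (-((n + 1 : ℕ) : ℤ)) = -(n : ℤ) - 1 from by push_cast; ring]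
      rw [jtp_w_pred hz hq0, norm_mul, mul_comm, mul_div_assoc,
        div_self (norm_ne_zero_iff.2 (hne (-n))), mul_one]
      rw [neg_neg, norm_mul, norm_zpow, zpow_natCast]
    refine Tendsto.congr (fun n => (hrat n).symm) ?_
    have := hgeo.const_mul ‖z⁻¹‖
    simpa using this

lemma jtp_one_sub_sum_le_prod (a : ℕ → ℝ) (s : Finset ℕ) (h0 : ∀ i ∈ s, 0 ≤ a i)
    (h1 : ∀ i ∈ s, a i ≤ 1) : 1 - ∑ i ∈ s, a i ≤ ∏ i ∈ s, (1 - a i) := by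
  induction s using Finset.cons_induction with
  | empty => simp
  | cons b s hb ih =>
    rw [Finset.prod_cons, Finset.sum_cons]
    have h0' : ∀ i ∈ s, 0 ≤ a i := fun i hi => h0 i (Finset.mem_cons_of_mem hi)
    have h1' : ∀ i ∈ s, a i ≤ 1 := fun i hi => h1 i (Finset.mem_cons_of_mem hi)
    have ihs := ih h0' h1'
    have hb0 : 0 ≤ a b := h0 b (Finset.mem_cons_self b s)
    have hb1 : a b ≤ 1 := h1 b (Finset.mem_cons_self b s)
    have hs0 : 0 ≤ ∑ i ∈ s, a i := Finset.sum_nonneg h0'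
    nlinarith

/-- Jacobi triple product identity:
`∏_{n≥0} (1+zq^{n+1})(1+z⁻¹qⁿ)(1-q^{n+1}) = ∑_{n∈ℤ} zⁿ q^{(n²+n)/2}`. -/
theorem jacobi_triple_product (z q : ℂ) (hz : z ≠ 0) (hq : ‖q‖ < 1) :
    ∏' n : ℕ, ((1 + z * q ^ (n + 1)) * (1 + z⁻¹ * q ^ n) * (1 - q ^ (n + 1))) =
      ∑' n : ℤ, z ^ n * q ^ ((n ^ 2 + n) / 2) := by
  by_cases hq0 : q = 0
  · subst hq0
    have hL : ∏' n : ℕ, ((1 + z * (0:ℂ) ^ (n + 1)) * (1 + z⁻¹ * (0:ℂ) ^ n) * (1 - (0:ℂ) ^ (n + 1)))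
        = 1 + z⁻¹ := by
      rw [tprod_eq_prod (s := {0})]
      · norm_num
      · intro n hn
        have hn0 : n ≠ 0 := by simpa using hn
        rw [zero_pow hn0, zero_pow (Nat.succ_ne_zero n)]
        ring
    have hR : ∑' n : ℤ, z ^ n * (0:ℂ) ^ ((n ^ 2 + n) / 2) = 1 + z⁻¹ := by
      rw [tsum_eq_sum (s := {0, -1})]
      · norm_num
      · intro n hn
        have h1 : n ≠ 0 ∧ n ≠ -1 := by
          constructor <;> (intro h; subst h; simp at hn)
        have h2 : (n ^ 2 + n) / 2 ≠ 0 := by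
          intro h
          have h3 := jtp_half n
          rw [h, mul_zero] at h3
          have h4 : n * (n + 1) = 0 := by linear_combination -h3
          rcases mul_eq_zero.1 h4 with h5 | h5
          · exact h1.1 h5
          · exact h1.2 (by linarith)
        rw [zero_zpow _ h2, mul_zero]
    rw [hL, hR]
  · -- main case
    have h1 : ∀ j : ℕ, 1 - q ^ (j + 1) ≠ 0 := by
      intro j hj
      have hlt : ‖q ^ (j + 1)‖ < 1 := by
        rw [norm_pow]; exact pow_lt_one₀ (norm_nonneg q) hq (Nat.succ_ne_zero j)
      rw [sub_eq_zero] at hj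
      rw [← hj] at hlt; simp at hlt
    have hsq : Summable fun n : ℕ => ‖q‖ ^ (n + 1) := by
      have := (summable_geometric_of_lt_one (norm_nonneg q) hq).mul_left ‖q‖
      refine this.congr fun n => ?_
      rw [← pow_succ']
    have MA : Multipliable fun n : ℕ => 1 + z * q ^ (n + 1) := by
      apply my_multipliable_one_add
      refine (hsq.mul_left ‖z‖).congr fun n => ?_
      rw [norm_mul, norm_pow]
    have MB : Multipliable fun n : ℕ => 1 + z⁻¹ * q ^ n := by
      apply my_multipliable_one_add
      have hsq' : Summable fun n : ℕ => ‖q‖ ^ n :=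
        summable_geometric_of_lt_one (norm_nonneg q) hq
      refine (hsq'.mul_left ‖z⁻¹‖).congr fun n => ?_
      rw [norm_mul, norm_pow]
    have MC : Multipliable fun n : ℕ => 1 - q ^ (n + 1) := by
      have : Multipliable fun n : ℕ => 1 + -(q ^ (n + 1)) := by
        apply my_multipliable_one_add
        refine hsq.congr fun n => ?_
        rw [norm_neg, norm_pow]
      refine this.congr fun n => ?_
      rw [← sub_eq_add_neg]
    set Finf : ℂ := ∏' n : ℕ, (1 - q ^ (n + 1)) with hFinfdef
    have hFtend : Tendsto (fun n => jtpF q n) atTop (𝓝 Finf) := by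
      simpa [jtpF] using MC.hasProd.tendsto_prod_nat
    -- lower bound for partial products
    have hfac : ∀ j : ℕ, 0 < 1 - ‖q‖ ^ (j + 1) := fun j => by
      have h7 : ‖q‖ ^ (j + 1) < 1 := pow_lt_one₀ (norm_nonneg q) hq (by omega)
      linarith
    obtain ⟨s₀, hs₀⟩ := (summable_iff_vanishing.1 hsq) (Metric.ball 0 (1 / 2))
      (Metric.ball_mem_nhds 0 (by norm_num))
    obtain ⟨J, hJ⟩ := s₀.exists_nat_subset_range
    set c₀ : ℝ := ∏ j ∈ Finset.range J, (1 - ‖q‖ ^ (j + 1)) with hc₀def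
    have hc₀ : 0 < c₀ := Finset.prod_pos fun j _ => hfac j
    have hlowP : ∀ n, c₀ / 2 ≤ ∏ j ∈ Finset.range n, (1 - ‖q‖ ^ (j + 1)) := by
      intro n
      rcases le_or_gt J n with h | h
      · rw [← Finset.prod_range_mul_prod_Ico _ h]
        have hdisj : Disjoint (Finset.Ico J n) s₀ := by
          refine Finset.disjoint_left.2 fun i hi his => ?_
          have h2 := hJ his
          rw [Finset.mem_Ico] at hi
          rw [Finset.mem_range] at h2
          omega
        have htail : ∑ j ∈ Finset.Ico J n, ‖q‖ ^ (j + 1) ≤ 1 / 2 := by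
          have h3 := hs₀ _ hdisj
          rw [Metric.mem_ball, dist_zero_right, Real.norm_eq_abs] at h3
          have h4 := le_abs_self (∑ j ∈ Finset.Ico J n, ‖q‖ ^ (j + 1))
          linarith
        have h2 : (1 : ℝ) / 2 ≤ ∏ j ∈ Finset.Ico J n, (1 - ‖q‖ ^ (j + 1)) := by
          have h5 := jtp_one_sub_sum_le_prod (fun j => ‖q‖ ^ (j + 1)) (Finset.Ico J n)
            (fun i _ => by positivity) (fun i _ => by have := hfac i; linarith)
          linarith
        calc c₀ / 2 = c₀ * (1 / 2) := by ring
          _ ≤ c₀ * ∏ j ∈ Finset.Ico J n, (1 - ‖q‖ ^ (j + 1)) :=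
              mul_le_mul_of_nonneg_left h2 hc₀.le
      · have hsplit : c₀ = (∏ j ∈ Finset.range n, (1 - ‖q‖ ^ (j + 1)))
            * ∏ j ∈ Finset.Ico n J, (1 - ‖q‖ ^ (j + 1)) := by
          rw [hc₀def, ← Finset.prod_range_mul_prod_Ico _ h.le]
        have hI1 : ∏ j ∈ Finset.Ico n J, (1 - ‖q‖ ^ (j + 1)) ≤ 1 :=
          Finset.prod_le_one (fun i _ => (hfac i).le) (fun i _ => by
            have : (0:ℝ) ≤ ‖q‖ ^ (i + 1) := by positivity
            linarith)
        have hPn : 0 < ∏ j ∈ Finset.range n, (1 - ‖q‖ ^ (j + 1)) :=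
          Finset.prod_pos fun j _ => hfac j
        nlinarith
    have hlowF : ∀ n, c₀ / 2 ≤ ‖jtpF q n‖ := by
      intro n
      refine (hlowP n).trans ?_
      rw [jtpF, norm_prod]
      refine Finset.prod_le_prod (fun j _ => (hfac j).le) fun j _ => ?_
      have h6 := norm_sub_norm_le (1 : ℂ) (q ^ (j + 1))
      rw [norm_one, norm_pow] at h6
      exact h6
    have hc2 : (0:ℝ) < c₀ / 2 := by linarith
    -- upper bound
    set C : ℝ := Real.exp (∑' j : ℕ, ‖q‖ ^ (j + 1)) with hCdef
    have hupF : ∀ n, ‖jtpF q n‖ ≤ C := by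
      intro n
      rw [jtpF, norm_prod]
      have step1 : ∏ j ∈ Finset.range n, ‖1 - q ^ (j + 1)‖
          ≤ ∏ j ∈ Finset.range n, (1 + ‖(fun j : ℕ => -(q ^ (j + 1))) j‖) := by
        refine Finset.prod_le_prod (fun j _ => norm_nonneg _) fun j _ => ?_
        have := norm_sub_le (1 : ℂ) (q ^ (j + 1))
        simpa [norm_neg] using this
      refine step1.trans ((my_prod_one_add_le_exp _ _).trans ?_)
      rw [hCdef]
      apply Real.exp_le_exp.2
      refine (Finset.sum_congr rfl fun j _ => by rw [norm_neg, norm_pow]).le.trans ?_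
      exact Summable.sum_le_tsum _ (fun i _ => by positivity) hsq
    have hC0 : 0 < C := Real.exp_pos _
    set B : ℝ := C / ((c₀ / 2) * (c₀ / 2)) with hBdef
    have hGBbound : ∀ n k, ‖jtpGB q n k‖ ≤ B := by
      intro n k
      rw [jtpGB, norm_div, norm_mul, hBdef]
      apply div_le_div₀ hC0.le (hupF n) (by positivity)
      exact mul_le_mul (hlowF k) (hlowF (n - k)) hc2.le (norm_nonneg _)
    have hFinfnorm : c₀ / 2 ≤ ‖Finf‖ :=
      ge_of_tendsto hFtend.norm (Filter.Eventually.of_forall hlowF)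
    have hFinf0 : Finf ≠ 0 := by
      intro h
      rw [h, norm_zero] at hFinfnorm
      linarith
    -- theta summability
    have hθ : Summable fun m : ℤ => ‖z ^ m * q ^ ((m ^ 2 + m) / 2)‖ :=
      jtp_theta_summable hz hq0 hq
    set w : ℤ → ℂ := fun m => z ^ m * q ^ ((m ^ 2 + m) / 2) with hwdef
    set g : ℕ → ℤ → ℂ := fun N m =>
      if -(N : ℤ) ≤ m ∧ m ≤ N then jtpGB q (2 * N) (m + N).toNat * w m else 0 with hgdef
    have hgsum : ∀ N : ℕ, (∑' m : ℤ, g N m)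
        = ∑ k ∈ Finset.range (2 * N + 1), jtpGB q (2 * N) k * z ^ ((k : ℤ) - N)
            * q ^ ((((k : ℤ) - N) ^ 2 + ((k : ℤ) - N)) / 2) := by
      intro N
      rw [tsum_eq_sum (s := Finset.Icc (-(N : ℤ)) N)
        (fun m hm => by
          simp only [hgdef]
          have : ¬(-(N : ℤ) ≤ m ∧ m ≤ N) := by
            rw [Finset.mem_Icc] at hm; tauto
          exact if_neg this)]
      refine Finset.sum_nbij' (i := fun m => (m + N).toNat) (j := fun k => (k : ℤ) - N)
        ?_ ?_ ?_ ?_ ?_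
      · intro m hm
        rw [Finset.mem_Icc] at hm
        rw [Finset.mem_range]
        omega
      · intro k hk
        rw [Finset.mem_range] at hk
        rw [Finset.mem_Icc]
        omega
      · intro m hm
        rw [Finset.mem_Icc] at hm
        omega
      · intro k hk
        rw [Finset.mem_range] at hk
        omega
      · intro m hm
        rw [Finset.mem_Icc] at hm
        simp only [hgdef, hwdef]
        rw [if_pos ⟨hm.1, hm.2⟩]
        have hcast : (((m + N).toNat : ℤ)) - N = m := by omega
        rw [hcast]
        ring
    have hgtend : ∀ m : ℤ, Tendsto (fun N => g N m) atTop (𝓝 (Finf⁻¹ * w m)) := by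
      intro m
      have hev : ∀ᶠ N : ℕ in atTop, jtpGB q (2 * N) (m + N).toNat * w m = g N m := by
        filter_upwards [eventually_ge_atTop m.natAbs] with N hN
        simp only [hgdef]
        rw [if_pos (show -(N : ℤ) ≤ m ∧ m ≤ N by constructor <;> omega)]
      have t2n : Tendsto (fun N : ℕ => 2 * N) atTop atTop :=
        tendsto_atTop_mono (f := fun n : ℕ => n) (fun n => by show n ≤ 2 * n; omega) tendsto_id
      have tmn : Tendsto (fun N : ℕ => (m + N).toNat) atTop atTop :=
        tendsto_atTop_mono (f := fun n : ℕ => n - m.natAbs) (fun n => by show n - m.natAbs ≤ (m + n).toNat; omega)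
          (tendsto_sub_atTop_nat _)
      have tdn : Tendsto (fun N : ℕ => 2 * N - (m + N).toNat) atTop atTop :=
        tendsto_atTop_mono (f := fun n : ℕ => n - m.natAbs) (fun n => by show n - m.natAbs ≤ 2 * n - (m + n).toNat; omega)
          (tendsto_sub_atTop_nat _)
      have tG : Tendsto (fun N : ℕ => jtpGB q (2 * N) (m + N).toNat) atTop
          (𝓝 (Finf / (Finf * Finf))) := by
        simp only [jtpGB]
        exact (hFtend.comp t2n).div ((hFtend.comp tmn).mul (hFtend.comp tdn))
          (mul_ne_zero hFinf0 hFinf0)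
      have hdiv : Finf / (Finf * Finf) = Finf⁻¹ := by
        field_simp
      rw [hdiv] at tG
      exact (tG.mul_const (w m)).congr' hev
    have hgbound : ∀ N : ℕ, ∀ m : ℤ, ‖g N m‖ ≤ B * ‖w m‖ := by
      intro N m
      simp only [hgdef]
      by_cases hcond : -(N : ℤ) ≤ m ∧ m ≤ N
      · rw [if_pos hcond, norm_mul]
        exact mul_le_mul_of_nonneg_right (hGBbound _ _) (norm_nonneg _)
      · rw [if_neg hcond, norm_zero]
        positivity
    have hdom : Tendsto (fun N => ∑' m : ℤ, g N m) atTop (𝓝 (∑' m : ℤ, Finf⁻¹ * w m)) :=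
      tendsto_tsum_of_dominated_convergence (hθ.mul_left B) hgtend
        (Filter.Eventually.of_forall hgbound)
    -- LHS limit
    have hPA := MA.hasProd.tendsto_prod_nat
    have hPB := MB.hasProd.tendsto_prod_nat
    have hLHS : Tendsto (fun N => ∏ j ∈ Finset.range N,
          ((1 + z * q ^ (j + 1)) * (1 + z⁻¹ * q ^ j))) atTop
        (𝓝 ((∏' n : ℕ, (1 + z * q ^ (n + 1))) * ∏' n : ℕ, (1 + z⁻¹ * q ^ n))) := by
      refine (hPA.mul hPB).congr fun N => ?_
      rw [← Finset.prod_mul_distrib]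
    have heq : ∀ N : ℕ, ∏ j ∈ Finset.range N, ((1 + z * q ^ (j + 1)) * (1 + z⁻¹ * q ^ j))
        = ∑' m : ℤ, g N m := fun N => (jtp_finite h1 hq0 hz N).trans (hgsum N).symm
    have hkey : (∏' n : ℕ, (1 + z * q ^ (n + 1))) * (∏' n : ℕ, (1 + z⁻¹ * q ^ n))
        = ∑' m : ℤ, Finf⁻¹ * w m :=
      tendsto_nhds_unique ((hLHS.congr heq)) hdom
    -- final assembly
    have hsplit : ∏' n : ℕ, ((1 + z * q ^ (n + 1)) * (1 + z⁻¹ * q ^ n) * (1 - q ^ (n + 1)))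
        = ((∏' n : ℕ, (1 + z * q ^ (n + 1))) * (∏' n : ℕ, (1 + z⁻¹ * q ^ n))) * Finf := by
      rw [hFinfdef, ← Multipliable.tprod_mul MA MB, ← Multipliable.tprod_mul (MA.mul MB) MC]
    rw [hsplit, hkey, tsum_mul_left]
    rw [mul_comm (Finf⁻¹ * ∑' m : ℤ, w m) Finf, ← mul_assoc, mul_inv_cancel₀ hFinf0, one_mul]
end

section
/- For complex numbers $z_1, \ldots, z_N$ with $|z_j| < 1$ for all $j$: $\prod_{j=1}^{N} \frac{1}{1-z_j} = 1 + \sum_{j=1}^{N} \frac{h_j(z_j, z_{j+1}, \ldots, z_N)}{(1-z_1)(1-z_2)\cdots(1-z_j)}$, where $h_j(z_j, \ldots, z_N)$ is the complete homogeneous symmetric polynomial of degree $j$ in the variables $z_j, z_{j+1}, \ldots, z_N$. -/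
open Finset

private def dset (N n m : ℕ) : Finset (Fin N → ℕ) :=
  (Fintype.piFinset fun _ : Fin N => Finset.range m).filter
    (fun δ => (∀ k : Fin N, (k : ℕ) < n → δ k = 0) ∧ ∑ k, δ k ≤ n)

private lemma mem_dset {N n m : ℕ} (hm : n < m) {δ : Fin N → ℕ} :
    δ ∈ dset N n m ↔ (∀ k : Fin N, (k : ℕ) < n → δ k = 0) ∧ ∑ k, δ k ≤ n := by
  simp only [dset, Finset.mem_filter, Fintype.mem_piFinset, Finset.mem_range]
  constructor
  · rintro ⟨-, h⟩; exact h
  · intro h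
    refine ⟨fun k => ?_, h⟩
    exact lt_of_le_of_lt
      (le_trans (Finset.single_le_sum (fun _ _ => Nat.zero_le _) (Finset.mem_univ k)) h.2) hm

private lemma dset_box {N n m m' : ℕ} (hm : n < m) (hm' : n < m') :
    dset N n m = dset N n m' := by
  ext δ; rw [mem_dset hm, mem_dset hm']

noncomputable def pp {N : ℕ} (z : Fin N → ℂ) (n : ℕ) : ℂ :=
  ∑ δ ∈ dset N n (n + 1), ∏ k, z k ^ δ k

private lemma pp_zero {N : ℕ} (z : Fin N → ℂ) : pp z 0 = 1 := by
  have : dset N 0 1 = {fun _ => 0} := by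
    ext δ
    rw [mem_dset (by norm_num), Finset.mem_singleton]
    constructor
    · rintro ⟨-, h⟩
      funext k
      have := Finset.single_le_sum (f := δ) (fun _ _ => Nat.zero_le _) (Finset.mem_univ k)
      omega
    · rintro rfl; simp
  simp [pp, this]

private lemma pp_top {N : ℕ} (z : Fin N → ℂ) : pp z N = 1 := by
  have : dset N N (N + 1) = {fun _ => 0} := by
    ext δ
    rw [mem_dset (by omega), Finset.mem_singleton]
    constructor
    · rintro ⟨h, -⟩
      funext k
      exact h k k.isLt
    · rintro rfl; simp
  simp [pp, this]

private lemma key {N : ℕ} (z : Fin N → ℂ) (j : Fin N) :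
    pp z ((j : ℕ) + 1) = (1 - z j) * pp z (j : ℕ) +
      ∑ β ∈ (Fintype.piFinset fun _ : Fin N => Finset.range ((j : ℕ) + 2)).filter
          (fun β => (∀ k, k < j → β k = 0) ∧ ∑ k, β k = (j : ℕ) + 1),
        ∏ k, z k ^ β k := by
  set n := (j : ℕ) with hn
  set B : Finset (Fin N → ℕ) :=
    (Fintype.piFinset fun _ : Fin N => Finset.range (n + 2)).filter
      (fun δ => (∀ k : Fin N, (k : ℕ) < n → δ k = 0) ∧ ∑ k, δ k ≤ n + 1) with hB
  -- split B by total degree = n+1 or ≤ n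
  have split1 : ∑ δ ∈ B, ∏ k, z k ^ δ k
      = (∑ β ∈ (Fintype.piFinset fun _ : Fin N => Finset.range ((j : ℕ) + 2)).filter
          (fun β => (∀ k, k < j → β k = 0) ∧ ∑ k, β k = (j : ℕ) + 1),
        ∏ k, z k ^ β k) + pp z n := by
    rw [← Finset.sum_filter_add_sum_filter_not B (fun δ => ∑ k, δ k = n + 1)]
    congr 1
    · congr 1
      ext δ
      simp only [hB, Finset.mem_filter, Fintype.mem_piFinset, Finset.mem_range, Fin.lt_def]
      constructor
      · rintro ⟨⟨h1, h2, -⟩, h4⟩; exact ⟨h1, h2, h4⟩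
      · rintro ⟨h1, h2, h4⟩; exact ⟨⟨h1, h2, by omega⟩, h4⟩
    · have : B.filter (fun δ => ¬ ∑ k, δ k = n + 1) = dset N n (n + 1) := by
        rw [dset_box (n.lt_succ_self) (by omega : n < n + 2)]
        ext δ
        rw [Finset.mem_filter, mem_dset (by omega)]
        simp only [hB, Finset.mem_filter, Fintype.mem_piFinset, Finset.mem_range]
        constructor
        · rintro ⟨⟨h1, h2, h3⟩, h4⟩; exact ⟨h2, by omega⟩
        · rintro ⟨h2, h3⟩
          refine ⟨⟨fun k => ?_, h2, by omega⟩, by omega⟩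
          have := Finset.single_le_sum (f := δ) (fun _ _ => Nat.zero_le _) (Finset.mem_univ k)
          omega
      rw [this]; rfl
  -- split B by δ j = 0 or not
  have hzero : B.filter (fun δ => δ j = 0) = dset N (n + 1) (n + 2) := by
    ext δ
    rw [Finset.mem_filter, mem_dset (by omega)]
    simp only [hB, Finset.mem_filter, Fintype.mem_piFinset, Finset.mem_range]
    constructor
    · rintro ⟨⟨h1, h2, h3⟩, h4⟩
      refine ⟨fun k hk => ?_, h3⟩
      rcases Nat.lt_or_ge (k : ℕ) n with h | h
      · exact h2 k h
      · have : k = j := Fin.ext (by omega)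
        rw [this]; exact h4
    · rintro ⟨h2, h3⟩
      exact ⟨⟨fun k => by
        have := Finset.single_le_sum (f := δ) (fun _ _ => Nat.zero_le _) (Finset.mem_univ k)
        omega, fun k hk => h2 k (by omega), h3⟩, h2 j (by omega)⟩
  have hpos : ∑ δ ∈ B.filter (fun δ => ¬ δ j = 0), ∏ k, z k ^ δ k
      = z j * pp z n := by
    have hsum_dec : ∀ δ : Fin N → ℕ, ∑ k, Function.update δ j (δ j - 1) k + δ j
        = ∑ k, δ k + (δ j - 1) := by
      intro δ
      rw [Finset.sum_update_of_mem (Finset.mem_univ j),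
        Finset.sum_eq_add_sum_sdiff_singleton_of_mem (Finset.mem_univ j) δ]
      omega
    have hsum_inc : ∀ δ : Fin N → ℕ, ∑ k, Function.update δ j (δ j + 1) k
        = ∑ k, δ k + 1 := by
      intro δ
      rw [Finset.sum_update_of_mem (Finset.mem_univ j),
        Finset.sum_eq_add_sum_sdiff_singleton_of_mem (Finset.mem_univ j) δ]
      omega
    rw [pp, Finset.mul_sum]
    refine Finset.sum_nbij' (i := fun δ => Function.update δ j (δ j - 1))
      (j := fun δ => Function.update δ j (δ j + 1)) ?_ ?_ ?_ ?_ ?_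
    · intro δ hδ
      rw [Finset.mem_filter, hB, Finset.mem_filter, Fintype.mem_piFinset] at hδ
      obtain ⟨⟨h1, h2, h3⟩, h4⟩ := hδ
      rw [mem_dset (by omega)]
      have hs := hsum_dec δ
      constructor
      · intro k hk
        show Function.update δ j (δ j - 1) k = 0
        rw [Function.update_of_ne (fun h => by subst h; omega)]
        exact h2 k hk
      · show ∑ k, Function.update δ j (δ j - 1) k ≤ n
        omega
    · intro δ hδ
      rw [mem_dset (by omega)] at hδ
      obtain ⟨h2, h3⟩ := hδ
      rw [Finset.mem_filter, hB, Finset.mem_filter, Fintype.mem_piFinset]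
      have hs := hsum_inc δ
      have hbd : ∀ k : Fin N, δ k ≤ n := by
        intro k
        have := Finset.single_le_sum (f := δ) (fun _ _ => Nat.zero_le _) (Finset.mem_univ k)
        omega
      refine ⟨⟨?_, ⟨?_, ?_⟩⟩, ?_⟩
      · intro k
        rw [Finset.mem_range]
        show Function.update δ j (δ j + 1) k < n + 2
        by_cases hk : k = j
        · subst hk; simp only [Function.update_self]; have := hbd k; omega
        · rw [Function.update_of_ne hk]; have := hbd k; omega
      · intro k hk
        show Function.update δ j (δ j + 1) k = 0
        rw [Function.update_of_ne (fun h => by subst h; omega)]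
        exact h2 k hk
      · show ∑ k, Function.update δ j (δ j + 1) k ≤ n + 1
        omega
      · show ¬ Function.update δ j (δ j + 1) j = 0
        simp
    · intro δ hδ
      rw [Finset.mem_filter] at hδ
      have h4 : ¬ δ j = 0 := hδ.2
      show Function.update (Function.update δ j (δ j - 1)) j
          (Function.update δ j (δ j - 1) j + 1) = δ
      funext k
      by_cases hk : k = j
      · subst hk
        simp only [Function.update_self]
        omega
      · simp [Function.update_of_ne hk]
    · intro δ hδ
      show Function.update (Function.update δ j (δ j + 1)) j
          (Function.update δ j (δ j + 1) j - 1) = δ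
      funext k
      by_cases hk : k = j
      · subst hk; simp
      · simp [Function.update_of_ne hk]
    · intro δ hδ
      rw [Finset.mem_filter] at hδ
      have h4 : ¬ δ j = 0 := hδ.2
      have hpt : (fun k => z k ^ Function.update δ j (δ j - 1) k)
          = Function.update (fun k => z k ^ δ k) j (z j ^ (δ j - 1)) := by
        funext k
        by_cases hk : k = j
        · subst hk; simp
        · simp [Function.update_of_ne hk]
      show ∏ k, z k ^ δ k = z j * ∏ k, z k ^ Function.update δ j (δ j - 1) k
      have hpow : z j ^ δ j = z j * z j ^ (δ j - 1) := by
        conv_lhs => rw [show δ j = 1 + (δ j - 1) by omega]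
        rw [pow_add, pow_one]
      calc ∏ k, z k ^ δ k
          = z j ^ δ j * ∏ k ∈ Finset.univ.erase j, z k ^ δ k :=
            (Finset.mul_prod_erase Finset.univ _ (Finset.mem_univ j)).symm
        _ = z j * (z j ^ (δ j - 1) * ∏ k ∈ Finset.univ.erase j, z k ^ δ k) := by
            rw [hpow]; ring
        _ = z j * ∏ k, z k ^ Function.update δ j (δ j - 1) k := by
            rw [hpt, Finset.prod_update_of_mem (Finset.mem_univ j),
              ← Finset.sdiff_singleton_eq_erase]
  have split2 : ∑ δ ∈ B, ∏ k, z k ^ δ k = pp z (n + 1) + z j * pp z n := by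
    rw [← Finset.sum_filter_add_sum_filter_not B (fun δ => δ j = 0), hpos]
    congr 1
    rw [hzero]; rfl
  have := split1.symm.trans split2
  linear_combination -this

private lemma claim {N : ℕ} (z : Fin N → ℂ) (hz1 : ∀ j, 1 - z j ≠ 0) :
    ∀ n, n ≤ N →
      pp z n = (∏ k ∈ Finset.univ.filter (fun k : Fin N => (k : ℕ) < n), (1 - z k)) *
        (1 + ∑ j ∈ Finset.univ.filter (fun j : Fin N => (j : ℕ) < n),
          (∑ β ∈ (Fintype.piFinset fun _ : Fin N => Finset.range ((j : ℕ) + 2)).filter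
              (fun β => (∀ k, k < j → β k = 0) ∧ ∑ k, β k = (j : ℕ) + 1),
            ∏ k, z k ^ β k) /
          ∏ k ∈ Finset.univ.filter (fun k => k ≤ j), (1 - z k)) := by
  intro n
  induction n with
  | zero =>
    intro _
    have he : Finset.univ.filter (fun k : Fin N => (k : ℕ) < 0) = ∅ := by
      simp
    rw [pp_zero, he]
    simp
  | succ n ih =>
    intro hn
    have hnN : n < N := by omega
    set jn : Fin N := ⟨n, hnN⟩ with hjn
    have hv : (jn : ℕ) = n := rfl
    have hins : Finset.univ.filter (fun k : Fin N => (k : ℕ) < n + 1)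
        = insert jn (Finset.univ.filter (fun k : Fin N => (k : ℕ) < n)) := by
      ext k
      simp only [Finset.mem_filter, Finset.mem_univ, true_and, Finset.mem_insert,
        Fin.ext_iff, hv]
      omega
    have hnotmem : jn ∉ Finset.univ.filter (fun k : Fin N => (k : ℕ) < n) := by
      simp only [Finset.mem_filter, Finset.mem_univ, true_and, hv]
      omega
    have hdle : Finset.univ.filter (fun k : Fin N => k ≤ jn)
        = Finset.univ.filter (fun k : Fin N => (k : ℕ) < n + 1) := by
      ext k
      simp only [Finset.mem_filter, Finset.mem_univ, true_and, Fin.le_def, hv]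
      omega
    have hd0 : (∏ k ∈ Finset.univ.filter (fun k : Fin N => (k : ℕ) < n), (1 - z k)) ≠ 0 :=
      Finset.prod_ne_zero_iff.2 fun k _ => hz1 k
    have hkey := key z jn
    rw [hins, Finset.sum_insert hnotmem, Finset.prod_insert hnotmem, hdle, hins,
      Finset.prod_insert hnotmem]
    rw [hv] at hkey
    rw [hkey, ih (by omega)]
    have hne : (1 - z jn) * ∏ k ∈ Finset.univ.filter (fun k : Fin N => (k : ℕ) < n), (1 - z k)
        ≠ 0 := mul_ne_zero (hz1 jn) hd0
    have hcancel := div_mul_cancel₀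
      (∑ β ∈ (Fintype.piFinset fun _ : Fin N => Finset.range (n + 2)).filter
          (fun β => (∀ k, k < jn → β k = 0) ∧ ∑ k, β k = n + 1),
        ∏ k, z k ^ β k) hne
    linear_combination -hcancel

/-- Level-of-tiling identity:
`∏_{j=1}^N 1/(1-z_j) = 1 + ∑_{j=1}^N h_j(z_j,…,z_N) / ((1-z_1)⋯(1-z_j))`,
where `h_j` is the complete homogeneous symmetric polynomial of degree `j`
in the variables `z_j, …, z_N` (here indexed by `Fin N`, so the 1-indexed
index `j` corresponds to `(j : Fin N) + 1`, and the degree is `(j:ℕ)+1`). -/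
theorem tiling_level_identity (N : ℕ) (z : Fin N → ℂ) (hz : ∀ j, ‖z j‖ < 1) :
    ∏ j, (1 - z j)⁻¹ =
      1 + ∑ j : Fin N,
        (∑ β ∈ (Fintype.piFinset fun _ : Fin N => Finset.range ((j : ℕ) + 2)).filter
            (fun β => (∀ k, k < j → β k = 0) ∧ ∑ k, β k = (j : ℕ) + 1),
          ∏ k, z k ^ β k) /
        ∏ k ∈ Finset.univ.filter (fun k => k ≤ j), (1 - z k) := by
  have hz1 : ∀ j, 1 - z j ≠ 0 := by
    intro j h
    have hj := hz j
    have hzj : z j = 1 := by linear_combination -h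
    rw [hzj] at hj
    norm_num at hj
  have hc := claim z hz1 N le_rfl
  rw [pp_top] at hc
  have huniv : Finset.univ.filter (fun k : Fin N => (k : ℕ) < N) = Finset.univ := by
    ext k; simp [k.isLt]
  rw [huniv] at hc
  rw [Finset.prod_inv_distrib]
  exact inv_eq_of_mul_eq_one_right hc.symm
end

section
/- (Rogers's identity) For $|q| < 1$: $\sum_{m=0}^{\infty} \frac{q^{m^2}}{(q)_m} = (-q^2;q^2)_{\infty} \sum_{m=0}^{\infty} \frac{q^{m^2}}{(q^4;q^4)_m}$. -/
open Filter Finset Complex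

lemma qPoch_zero (t : ℂ) : qPoch t 0 = 1 := by simp [qPoch]

lemma qPoch_succ (t : ℂ) (n : ℕ) : qPoch t (n + 1) = qPoch t n * (1 - t ^ (n + 1)) :=
  Finset.prod_range_succ _ _

lemma one_sub_ne_zero_of_norm_lt_one {x : ℂ} (h : ‖x‖ < 1) : 1 - x ≠ 0 := by
  intro hx
  have : x = 1 := by linear_combination -hx
  rw [this] at h; simp at h

lemma one_add_ne_zero_of_norm_lt_one {x : ℂ} (h : ‖x‖ < 1) : 1 + x ≠ 0 := by
  intro hx
  have : x = -1 := by linear_combination hx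
  rw [this] at h; simp at h

lemma norm_pow_succ_lt {t : ℂ} (ht : ‖t‖ < 1) (n : ℕ) : ‖t ^ (n + 1)‖ < 1 := by
  rw [norm_pow]
  exact pow_lt_one₀ (norm_nonneg t) ht (Nat.succ_ne_zero n)

lemma le_norm_qPoch {t : ℂ} (ht : ‖t‖ < 1) (n : ℕ) : (1 - ‖t‖) ^ n ≤ ‖qPoch t n‖ := by
  induction n with
  | zero => simp [qPoch]
  | succ n ih =>
    rw [qPoch_succ, pow_succ, norm_mul]
    have h1 : 1 - ‖t‖ ≤ ‖1 - t ^ (n + 1)‖ := by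
      have h2 : ‖(1 : ℂ)‖ - ‖t ^ (n + 1)‖ ≤ ‖1 - t ^ (n + 1)‖ := norm_sub_norm_le _ _
      have h3 : ‖t ^ (n + 1)‖ ≤ ‖t‖ := by
        rw [norm_pow]
        exact pow_le_of_le_one (norm_nonneg t) ht.le (Nat.succ_ne_zero n)
      simp only [norm_one] at h2
      linarith
    exact mul_le_mul ih h1 (by linarith) (norm_nonneg _)

lemma qPoch_ne_zero_s17 {t : ℂ} (ht : ‖t‖ < 1) (n : ℕ) : qPoch t n ≠ 0 := by
  have h := le_norm_qPoch ht n
  have : (0 : ℝ) < (1 - ‖t‖) ^ n := pow_pos (by linarith) n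
  intro h0
  rw [h0, norm_zero] at h
  linarith

lemma summable_pow_mul {r C : ℝ} (h0 : 0 ≤ r) (hr : r < 1) (hC : 0 ≤ C)
    (e : ℕ → ℕ) (he : ∀ n, e n + n ≤ e (n + 1)) :
    Summable (fun n => r ^ (e n) * C ^ n) := by
  apply summable_of_ratio_norm_eventually_le (r := 1 / 2) (by norm_num)
  have h : Tendsto (fun n : ℕ => r ^ n * C) atTop (nhds (0 * C)) :=
    (tendsto_pow_atTop_nhds_zero_of_lt_one h0 hr).mul_const C
  rw [zero_mul] at h
  filter_upwards [h.eventually_le_const (by norm_num : (0 : ℝ) < 1 / 2)] with n hn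
  have hterm : ∀ m : ℕ, ‖r ^ (e m) * C ^ m‖ = r ^ (e m) * C ^ m := by
    intro m
    rw [Real.norm_eq_abs, _root_.abs_of_nonneg (by positivity)]
  rw [hterm, hterm]
  calc r ^ (e (n + 1)) * C ^ (n + 1)
      ≤ r ^ (e n + n) * C ^ (n + 1) := by
        apply mul_le_mul_of_nonneg_right _ (by positivity)
        exact pow_le_pow_of_le_one h0 hr.le (he n)
    _ = (r ^ n * C) * (r ^ (e n) * C ^ n) := by ring
    _ ≤ (1 / 2) * (r ^ (e n) * C ^ n) := by
        apply mul_le_mul_of_nonneg_right hn (by positivity)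

def tri : ℕ → ℕ
  | 0 => 0
  | n + 1 => tri n + n

lemma tri_succ_s17 (n : ℕ) : tri (n + 1) = tri n + n := rfl

lemma two_tri (k : ℕ) : 2 * tri k + 2 * k = k * k + k := by
  induction k with
  | zero => rfl
  | succ k ih =>
    rw [tri_succ_s17]
    have : (k + 1) * (k + 1) = k * k + 2 * k + 1 := by ring
    omega

lemma qbinom {t : ℂ} (ht : ‖t‖ < 1) (z : ℂ) (m : ℕ) :
    ∏ j ∈ Finset.range m, (1 + z * t ^ j)
      = ∑ k ∈ Finset.range (m + 1),
          t ^ tri k * z ^ k * (qPoch t m / (qPoch t k * qPoch t (m - k))) := by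
  have hP : ∀ j, qPoch t j ≠ 0 := qPoch_ne_zero_s17 ht
  induction m with
  | zero => simp [qPoch, tri]
  | succ m ih =>
    have key : ∀ k ∈ Finset.range (m + 2),
        t ^ tri k * z ^ k * (qPoch t (m + 1) / (qPoch t k * qPoch t (m + 1 - k)))
          = (if k ≤ m then t ^ tri k * z ^ k * (qPoch t m / (qPoch t k * qPoch t (m - k))) else 0)
            + z * t ^ m *
              (if 1 ≤ k then t ^ tri (k - 1) * z ^ (k - 1) *
                (qPoch t m / (qPoch t (k - 1) * qPoch t (m - (k - 1)))) else 0) := by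
      intro k hk
      rw [Finset.mem_range] at hk
      rcases Nat.eq_zero_or_pos k with rfl | hk1
      · rw [if_pos (Nat.zero_le m), if_neg (by omega)]
        simp only [Nat.sub_zero, pow_zero, tri, mul_zero, add_zero]
        rw [qPoch_zero]
        field_simp
        rw [div_self (hP _), div_self (hP _)]
      · obtain ⟨j, rfl⟩ : ∃ j, k = j + 1 := ⟨k - 1, (Nat.succ_pred_eq_of_pos hk1).symm⟩
        simp only [Nat.add_sub_cancel]
        rcases Nat.lt_or_ge m (j + 1) with hm | hm
        · have hjm : j = m := by omega
          subst hjm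
          rw [if_neg (by omega), if_pos (by omega)]
          have e1 : j + 1 - (j + 1) = 0 := by omega
          have e2 : j - j = 0 := by omega
          rw [e1, e2, qPoch_zero, tri_succ_s17, qPoch_succ]
          have h1 := hP (j + 1)
          have h2 := hP j
          have h3 : (1 : ℂ) - t ^ (j + 1) ≠ 0 :=
            one_sub_ne_zero_of_norm_lt_one (norm_pow_succ_lt ht j)
          field_simp [qPoch_succ]
          ring
        · obtain ⟨a, rfl⟩ : ∃ a, m = j + 1 + a := ⟨m - (j + 1), by omega⟩
          rw [if_pos (by omega), if_pos (by omega)]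
          have e1 : j + 1 + a + 1 - (j + 1) = a + 1 := by omega
          have e2 : j + 1 + a - (j + 1) = a := by omega
          have e3 : j + 1 + a - j = a + 1 := by omega
          rw [e1, e2, e3, tri_succ_s17]
          rw [qPoch_succ t (j + 1 + a), qPoch_succ t a, qPoch_succ t j]
          have h1 := hP (j + 1 + a)
          have h2 := hP j
          have h3 := hP a
          have h4 : (1 : ℂ) - t ^ (j + 1) ≠ 0 :=
            one_sub_ne_zero_of_norm_lt_one (norm_pow_succ_lt ht j)
          have h5 : (1 : ℂ) - t ^ (a + 1) ≠ 0 :=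
            one_sub_ne_zero_of_norm_lt_one (norm_pow_succ_lt ht a)
          field_simp
          ring
    rw [Finset.prod_range_succ, ih, Finset.sum_congr rfl key, Finset.sum_add_distrib]
    have hA : ∑ k ∈ Finset.range (m + 2),
        (if k ≤ m then t ^ tri k * z ^ k * (qPoch t m / (qPoch t k * qPoch t (m - k))) else 0)
        = ∑ k ∈ Finset.range (m + 1),
            t ^ tri k * z ^ k * (qPoch t m / (qPoch t k * qPoch t (m - k))) := by
      rw [Finset.sum_range_succ, if_neg (by omega), add_zero]
      apply Finset.sum_congr rfl
      intro k hk
      rw [Finset.mem_range] at hk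
      rw [if_pos (by omega)]
    have hB : ∑ k ∈ Finset.range (m + 2),
        z * t ^ m * (if 1 ≤ k then t ^ tri (k - 1) * z ^ (k - 1) *
          (qPoch t m / (qPoch t (k - 1) * qPoch t (m - (k - 1)))) else 0)
        = z * t ^ m * ∑ k ∈ Finset.range (m + 1),
            t ^ tri k * z ^ k * (qPoch t m / (qPoch t k * qPoch t (m - k))) := by
      rw [← Finset.mul_sum]
      congr 1
      rw [Finset.sum_range_succ']
      simp only [Nat.add_sub_cancel, if_pos (Nat.le_add_left 1 _), if_neg (by omega : ¬ 1 ≤ 0),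
        add_zero]
    rw [hA, hB]
    ring

section Euler

variable {t z : ℂ}

lemma norm_zt_le (ht : ‖t‖ < 1) (j : ℕ) : ‖z * t ^ j‖ ≤ ‖z‖ := by
  rw [norm_mul, norm_pow]
  calc ‖z‖ * ‖t‖ ^ j ≤ ‖z‖ * 1 := by
        apply mul_le_mul_of_nonneg_left _ (norm_nonneg z)
        exact pow_le_one₀ (norm_nonneg t) ht.le
    _ = ‖z‖ := mul_one _

lemma summable_log_one_add (ht : ‖t‖ < 1) (hz : ‖z‖ < 1) :
    Summable (fun j : ℕ => Complex.log (1 + z * t ^ j)) := by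
  set K : ℝ := ‖z‖ * (1 - ‖z‖)⁻¹ / 2 + 1 with hK
  have hKpos : 0 ≤ K := by
    have : (0:ℝ) ≤ ‖z‖ * (1 - ‖z‖)⁻¹ := by
      apply mul_nonneg (norm_nonneg z)
      rw [inv_nonneg]; linarith
    simp only [hK]; linarith
  apply Summable.of_norm_bounded (g := fun j => K * (‖z‖ * ‖t‖ ^ j))
  · exact ((summable_geometric_of_lt_one (norm_nonneg t) ht).mul_left _).mul_left _
  · intro j
    set w := z * t ^ j with hw
    have hwle : ‖w‖ ≤ ‖z‖ := norm_zt_le ht j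
    have hw1 : ‖w‖ < 1 := lt_of_le_of_lt hwle hz
    have hb := Complex.norm_log_one_add_le hw1
    have hinv : (1 - ‖w‖)⁻¹ ≤ (1 - ‖z‖)⁻¹ := by
      apply inv_anti₀ (by linarith)
      linarith
    have hsq : ‖w‖ ^ 2 ≤ ‖z‖ * ‖w‖ := by
      have := norm_nonneg w
      nlinarith
    have h2 : ‖w‖ ^ 2 * (1 - ‖w‖)⁻¹ / 2 + ‖w‖ ≤ K * ‖w‖ := by
      have hi1 : (0:ℝ) ≤ (1 - ‖w‖)⁻¹ := by rw [inv_nonneg]; linarith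
      have hi2 : (0:ℝ) ≤ (1 - ‖z‖)⁻¹ := by rw [inv_nonneg]; linarith
      have : ‖w‖ ^ 2 * (1 - ‖w‖)⁻¹ ≤ (‖z‖ * ‖w‖) * (1 - ‖z‖)⁻¹ := by
        apply mul_le_mul hsq hinv hi1
        positivity
      simp only [hK]
      nlinarith [norm_nonneg w]
    have hnorm : ‖w‖ = ‖z‖ * ‖t‖ ^ j := by rw [hw, norm_mul, norm_pow]
    calc ‖Complex.log (1 + w)‖ ≤ ‖w‖ ^ 2 * (1 - ‖w‖)⁻¹ / 2 + ‖w‖ := hb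
      _ ≤ K * ‖w‖ := h2
      _ = K * (‖z‖ * ‖t‖ ^ j) := by rw [hnorm]

lemma one_add_zt_ne_zero (ht : ‖t‖ < 1) (hz : ‖z‖ < 1) (j : ℕ) : (1 : ℂ) + z * t ^ j ≠ 0 :=
  one_add_ne_zero_of_norm_lt_one (lt_of_le_of_lt (norm_zt_le ht j) hz)

lemma multipliable_one_add_zt (ht : ‖t‖ < 1) (hz : ‖z‖ < 1) :
    Multipliable (fun j : ℕ => 1 + z * t ^ j) :=
  Complex.multipliable_of_summable_log (summable_log_one_add ht hz)

lemma tprod_one_add_eq_exp (ht : ‖t‖ < 1) (hz : ‖z‖ < 1) :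
    ∏' j : ℕ, (1 + z * t ^ j) = Complex.exp (∑' j : ℕ, Complex.log (1 + z * t ^ j)) :=
  (Complex.cexp_tsum_eq_tprod (fun j => one_add_zt_ne_zero ht hz j)
    (summable_log_one_add ht hz)).symm

end Euler

section Euler2

variable {t z : ℂ}

lemma qPoch_add (t : ℂ) (a b : ℕ) :
    qPoch t (a + b) = qPoch t a * ∏ i ∈ Finset.range b, (1 - t ^ (a + i + 1)) := by
  rw [qPoch, Finset.prod_range_add]
  rfl

lemma euler (ht : ‖t‖ < 1) (hz : ‖z‖ < 1) :
    ∏' j : ℕ, (1 + z * t ^ j) = ∑' k : ℕ, t ^ tri k * z ^ k / qPoch t k := by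
  have hP : ∀ j, qPoch t j ≠ 0 := qPoch_ne_zero_s17 ht
  set F : ℕ → ℕ → ℂ := fun m k =>
    if k ≤ m then t ^ tri k * z ^ k * (qPoch t m / (qPoch t k * qPoch t (m - k))) else 0 with hF
  have hFeq : ∀ m k, k ≤ m → F m k
      = t ^ tri k * z ^ k / qPoch t k * ∏ i ∈ Finset.range k, (1 - t ^ (m - k + i + 1)) := by
    intro m k hkm
    have hm : m = (m - k) + k := by omega
    rw [hF]
    simp only [if_pos hkm]
    rw [hm, qPoch_add t (m - k) k]
    have h1 := hP k
    have h2 := hP (m - k)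
    field_simp
    rw [Nat.add_sub_cancel, mul_right_comm (t ^ tri k * z ^ k), mul_div_cancel_right₀ _ h2]
  have hL : Filter.Tendsto (fun m => ∑' k, F m k) Filter.atTop
      (nhds (∏' j : ℕ, (1 + z * t ^ j))) := by
    have h0 : Filter.Tendsto (fun m => ∏ j ∈ Finset.range m, (1 + z * t ^ j)) Filter.atTop
        (nhds (∏' j : ℕ, (1 + z * t ^ j))) :=
      (multipliable_one_add_zt ht hz).hasProd.tendsto_prod_nat
    apply h0.congr
    intro m
    rw [qbinom ht z m]
    rw [tsum_eq_sum (s := Finset.range (m + 1)) ?_]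
    · apply Finset.sum_congr rfl
      intro k hk
      rw [Finset.mem_range] at hk
      rw [hF]; simp only [if_pos (by omega : k ≤ m)]
    · intro k hk
      rw [Finset.mem_range] at hk
      rw [hF]; simp only [if_neg (by omega : ¬ k ≤ m)]
  have hR : Filter.Tendsto (fun m => ∑' k, F m k) Filter.atTop
      (nhds (∑' k : ℕ, t ^ tri k * z ^ k / qPoch t k)) := by
    apply tendsto_tsum_of_dominated_convergence
      (bound := fun k => ‖t‖ ^ tri k * (‖z‖ * (2 / (1 - ‖t‖))) ^ k)
    · apply summable_pow_mul (norm_nonneg t) ht _ tri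
      · intro n; rw [tri_succ_s17]
      · apply mul_nonneg (norm_nonneg z)
        apply div_nonneg (by norm_num)
        linarith
    · intro k
      have hcong : ∀ᶠ m in Filter.atTop, t ^ tri k * z ^ k / qPoch t k *
          ∏ i ∈ Finset.range k, (1 - t ^ (m - k + i + 1)) = F m k := by
        filter_upwards [Filter.eventually_ge_atTop k] with m hm
        rw [hFeq m k hm]
      apply Filter.Tendsto.congr' hcong
      have hprod : Filter.Tendsto
          (fun m => ∏ i ∈ Finset.range k, (1 - t ^ (m - k + i + 1))) Filter.atTop
          (nhds (∏ i ∈ Finset.range k, (1 : ℂ))) := by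
        apply tendsto_finset_prod
        intro i _
        have h1 : Filter.Tendsto (fun m : ℕ => t ^ (m - k) * t ^ (i + 1)) Filter.atTop
            (nhds (0 * t ^ (i + 1))) := by
          apply Filter.Tendsto.mul_const
          exact (tendsto_pow_atTop_nhds_zero_of_norm_lt_one ht).comp
            (Filter.tendsto_sub_atTop_nat k)
        rw [zero_mul] at h1
        have h2 : ∀ m : ℕ, (1 : ℂ) - t ^ (m - k + i + 1) = 1 - t ^ (m - k) * t ^ (i + 1) := by
          intro m
          rw [← pow_add, Nat.add_assoc]
        simp only [h2]
        simpa using (tendsto_const_nhds (x := (1:ℂ))).sub h1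
      rw [Finset.prod_const_one] at hprod
      have := (tendsto_const_nhds
        (x := t ^ tri k * z ^ k / qPoch t k) (f := Filter.atTop (α := ℕ))).mul hprod
      rw [mul_one] at this
      exact this
    · apply Filter.Eventually.of_forall
      intro m k
      have h1t : (0:ℝ) < 1 - ‖t‖ := by linarith
      rcases le_or_gt k m with hkm | hkm
      · rw [hFeq m k hkm]
        rw [norm_mul, norm_div, norm_mul, norm_pow, norm_pow]
        have hb1 : ‖∏ i ∈ Finset.range k, (1 - t ^ (m - k + i + 1))‖ ≤ 2 ^ k := by
          rw [norm_prod]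
          calc ∏ i ∈ Finset.range k, ‖(1:ℂ) - t ^ (m - k + i + 1)‖
              ≤ ∏ _i ∈ Finset.range k, (2:ℝ) := by
                apply Finset.prod_le_prod
                · intro i _; exact norm_nonneg _
                · intro i _
                  calc ‖(1:ℂ) - t ^ (m - k + i + 1)‖ ≤ ‖(1:ℂ)‖ + ‖t ^ (m - k + i + 1)‖ :=
                  norm_sub_le _ _
                    _ ≤ 1 + 1 := by
                        rw [norm_one, norm_pow]
                        have : ‖t‖ ^ (m - k + i + 1) ≤ 1 :=
                          pow_le_one₀ (norm_nonneg t) ht.le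
                        linarith
                    _ = 2 := by norm_num
            _ = 2 ^ k := by rw [Finset.prod_const, Finset.card_range]
        have hb2 : ‖t‖ ^ tri k * ‖z‖ ^ k / ‖qPoch t k‖ ≤
            ‖t‖ ^ tri k * ‖z‖ ^ k / (1 - ‖t‖) ^ k := by
          gcongr
          exact le_norm_qPoch ht k
        calc ‖t‖ ^ tri k * ‖z‖ ^ k / ‖qPoch t k‖ * ‖∏ i ∈ Finset.range k, (1 - t ^ (m - k + i + 1))‖
            ≤ ‖t‖ ^ tri k * ‖z‖ ^ k / (1 - ‖t‖) ^ k * 2 ^ k := by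
              apply mul_le_mul hb2 hb1 (norm_nonneg _) (by positivity)
          _ = ‖t‖ ^ tri k * (‖z‖ * (2 / (1 - ‖t‖))) ^ k := by
              have h1t' : (1:ℝ) - ‖t‖ ≠ 0 := ne_of_gt h1t
              field_simp
              rw [div_pow, mul_assoc (‖t‖ ^ tri k) ((1 - ‖t‖) ^ k), mul_div_cancel₀ _ (pow_ne_zero k h1t'),
                mul_pow, mul_assoc]
      · rw [hF]
        simp only [if_neg (by omega : ¬ k ≤ m), norm_zero]
        positivity
  exact tendsto_nhds_unique hL hR

end Euler2

section Shift

variable {t z : ℂ}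

lemma tprod_shift (ht : ‖t‖ < 1) (hz : ‖z‖ < 1) (n : ℕ) :
    ∏' j : ℕ, (1 + z * t ^ j)
      = (∏ j ∈ Finset.range n, (1 + z * t ^ j)) * ∏' j : ℕ, (1 + z * t ^ n * t ^ j) := by
  have hz' : ‖z * t ^ n‖ < 1 := lt_of_le_of_lt (norm_zt_le ht n) hz
  have htail : ∀ j : ℕ, (1 : ℂ) + z * t ^ (j + n) = 1 + z * t ^ n * t ^ j := by
    intro j
    rw [pow_add]
    ring
  rw [tprod_one_add_eq_exp ht hz]
  have h2 : ∏' j : ℕ, (1 + z * t ^ n * t ^ j)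
      = Complex.exp (∑' j : ℕ, Complex.log (1 + z * t ^ (j + n))) := by
    rw [tprod_one_add_eq_exp ht hz']
    congr 1
    apply tsum_congr
    intro j
    rw [htail j]
  rw [h2, ← Summable.sum_add_tsum_nat_add n (summable_log_one_add ht hz), Complex.exp_add]
  congr 1
  rw [Complex.exp_sum]
  apply Finset.prod_congr rfl
  intro j _
  exact Complex.exp_log (one_add_zt_ne_zero ht hz j)

end Shift

section Dagger

variable {q : ℂ}

lemma dagger (hq : ‖q‖ < 1) (N : ℕ) :
    ∑ k ∈ Finset.range (N + 1), q ^ k / (qPoch (q ^ 2) k * qPoch (q ^ 2) (N - k))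
      = 1 / qPoch q N := by
  have hq2 : ‖q ^ 2‖ < 1 := by
    rw [norm_pow]
    exact pow_lt_one₀ (norm_nonneg q) hq (by norm_num)
  have hP : ∀ j, qPoch (q ^ 2) j ≠ 0 := qPoch_ne_zero_s17 hq2
  have hPq : ∀ j, qPoch q j ≠ 0 := qPoch_ne_zero_s17 hq
  induction N with
  | zero => simp [qPoch]
  | succ N ih =>
    have key : ∀ k ∈ Finset.range (N + 2),
        (1 - (q ^ 2) ^ (N + 1)) * (q ^ k / (qPoch (q ^ 2) k * qPoch (q ^ 2) (N + 1 - k)))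
          = (if k ≤ N then q ^ k / (qPoch (q ^ 2) k * qPoch (q ^ 2) (N - k)) else 0)
            + (if 1 ≤ k then q ^ k * (q ^ 2) ^ (N + 1 - k) /
                (qPoch (q ^ 2) (k - 1) * qPoch (q ^ 2) (N + 1 - k)) else 0) := by
      intro k hk
      rw [Finset.mem_range] at hk
      rcases Nat.eq_zero_or_pos k with rfl | hk1
      · rw [if_pos (Nat.zero_le N), if_neg (by omega), add_zero]
        simp only [Nat.sub_zero, pow_zero]
        rw [qPoch_zero, qPoch_succ]
        have h1 := hP N
        have h2 : (1 : ℂ) - (q ^ 2) ^ (N + 1) ≠ 0 :=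
          one_sub_ne_zero_of_norm_lt_one (norm_pow_succ_lt hq2 N)
        field_simp
      · obtain ⟨j, rfl⟩ : ∃ j, k = j + 1 := ⟨k - 1, (Nat.succ_pred_eq_of_pos hk1).symm⟩
        simp only [Nat.add_sub_cancel]
        rcases Nat.lt_or_ge N (j + 1) with hm | hm
        · have hjm : j = N := by omega
          subst hjm
          rw [if_neg (by omega), if_pos (by omega), zero_add]
          have e1 : j + 1 - (j + 1) = 0 := by omega
          rw [e1, qPoch_zero, qPoch_succ]
          have h1 := hP j
          have h2 := hP (j + 1)
          have h4 : (1 : ℂ) - (q ^ 2) ^ (j + 1) ≠ 0 :=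
            one_sub_ne_zero_of_norm_lt_one (norm_pow_succ_lt hq2 j)
          field_simp
        · obtain ⟨a, rfl⟩ : ∃ a, N = j + 1 + a := ⟨N - (j + 1), by omega⟩
          rw [if_pos (by omega), if_pos (by omega)]
          have e1 : j + 1 + a + 1 - (j + 1) = a + 1 := by omega
          have e2 : j + 1 + a - (j + 1) = a := by omega
          rw [e1, e2]
          rw [qPoch_succ (q ^ 2) a, qPoch_succ (q ^ 2) j]
          have h1 := hP (j + 1 + a)
          have h2 := hP j
          have h3 := hP a
          have h4 : (1 : ℂ) - (q ^ 2) ^ (j + 1) ≠ 0 :=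
            one_sub_ne_zero_of_norm_lt_one (norm_pow_succ_lt hq2 j)
          have h5 : (1 : ℂ) - (q ^ 2) ^ (a + 1) ≠ 0 :=
            one_sub_ne_zero_of_norm_lt_one (norm_pow_succ_lt hq2 a)
          field_simp
          ring
    have hsum : (1 - (q ^ 2) ^ (N + 1)) *
        ∑ k ∈ Finset.range (N + 2), q ^ k / (qPoch (q ^ 2) k * qPoch (q ^ 2) (N + 1 - k))
          = (1 + q ^ (N + 1)) *
            ∑ k ∈ Finset.range (N + 1), q ^ k / (qPoch (q ^ 2) k * qPoch (q ^ 2) (N - k)) := by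
      rw [Finset.mul_sum, Finset.sum_congr rfl key, Finset.sum_add_distrib]
      have hA : ∑ k ∈ Finset.range (N + 2),
          (if k ≤ N then q ^ k / (qPoch (q ^ 2) k * qPoch (q ^ 2) (N - k)) else 0)
          = ∑ k ∈ Finset.range (N + 1), q ^ k / (qPoch (q ^ 2) k * qPoch (q ^ 2) (N - k)) := by
        rw [Finset.sum_range_succ, if_neg (by omega), add_zero]
        apply Finset.sum_congr rfl
        intro k hk
        rw [Finset.mem_range] at hk
        rw [if_pos (by omega)]
      have hB : ∑ k ∈ Finset.range (N + 2),
          (if 1 ≤ k then q ^ k * (q ^ 2) ^ (N + 1 - k) /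
              (qPoch (q ^ 2) (k - 1) * qPoch (q ^ 2) (N + 1 - k)) else 0)
          = q ^ (N + 1) *
            ∑ k ∈ Finset.range (N + 1), q ^ k / (qPoch (q ^ 2) k * qPoch (q ^ 2) (N - k)) := by
        rw [Finset.sum_range_succ']
        simp only [Nat.add_sub_cancel, if_pos (Nat.le_add_left 1 _), if_neg (by omega : ¬ 1 ≤ 0),
          add_zero]
        have step : ∀ k ∈ Finset.range (N + 1),
            q ^ (k + 1) * (q ^ 2) ^ (N + 1 - (k + 1)) /
              (qPoch (q ^ 2) k * qPoch (q ^ 2) (N + 1 - (k + 1)))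
            = q ^ (N + 1) * (q ^ (N - k) / (qPoch (q ^ 2) k * qPoch (q ^ 2) (N - k))) := by
          intro k hk
          rw [Finset.mem_range] at hk
          have e1 : N + 1 - (k + 1) = N - k := by omega
          rw [e1]
          have e2 : q ^ (k + 1) * (q ^ 2) ^ (N - k) = q ^ (N + 1) * q ^ (N - k) := by
            rw [← pow_mul, ← pow_add, ← pow_add]
            congr 1
            omega
          rw [← mul_div_assoc, ← e2]
        rw [Finset.sum_congr rfl step, ← Finset.mul_sum]
        congr 1
        -- reflection: ∑ q^(N-k)/(P k * P (N-k)) = ∑ q^k/(P k * P (N-k))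
        rw [← Finset.sum_range_reflect]
        apply Finset.sum_congr rfl
        intro k hk
        rw [Finset.mem_range] at hk
        have e1 : N + 1 - 1 - k = N - k := by omega
        have e2 : N - (N - k) = k := by omega
        rw [e1, e2, mul_comm (qPoch (q ^ 2) (N - k))]
      rw [hA, hB, ih]
      ring
    rw [ih] at hsum
    have hc : (1 : ℂ) - (q ^ 2) ^ (N + 1) ≠ 0 :=
      one_sub_ne_zero_of_norm_lt_one (norm_pow_succ_lt hq2 N)
    apply mul_left_cancel₀ hc
    rw [hsum, qPoch_succ]
    have h1 := hPq N
    have h2 : (1 : ℂ) - q ^ (N + 1) ≠ 0 :=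
      one_sub_ne_zero_of_norm_lt_one (norm_pow_succ_lt hq N)
    have h3 : (1 : ℂ) - (q ^ 2) ^ (N + 1) = (1 - q ^ (N + 1)) * (1 + q ^ (N + 1)) := by
      rw [← pow_mul, mul_comm 2 (N + 1), pow_mul]
      ring
    rw [h3]
    field_simp

lemma dagger' (hq : ‖q‖ < 1) (N : ℕ) :
    ∑ k ∈ Finset.range (N + 1), q ^ (N - k) / (qPoch (q ^ 2) k * qPoch (q ^ 2) (N - k))
      = 1 / qPoch q N := by
  rw [← dagger hq N, ← Finset.sum_range_reflect]
  apply Finset.sum_congr rfl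
  intro k hk
  rw [Finset.mem_range] at hk
  have e1 : N + 1 - 1 - k = N - k := by omega
  have e2 : N - (N - k) = k := by omega
  rw [e1, e2, mul_comm (qPoch (q ^ 2) (N - k))]

end Dagger

/-- Rogers's identity: `∑ q^{m²}/(q)ₘ = (-q²;q²)_∞ ∑ q^{m²}/(q⁴;q⁴)ₘ`. -/
theorem rogers_identity_one (q : ℂ) (hq : ‖q‖ < 1) :
    ∑' m : ℕ, q ^ (m ^ 2) / qPoch q m =
      (∏' k : ℕ, (1 + q ^ 2 * (q ^ 2) ^ k)) * ∑' m : ℕ, q ^ (m ^ 2) / qPoch (q ^ 4) m := by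
  have hq2 : ‖q ^ 2‖ < 1 := by
    rw [norm_pow]; exact pow_lt_one₀ (norm_nonneg q) hq (by norm_num)
  have hP2 : ∀ j, qPoch (q ^ 2) j ≠ 0 := qPoch_ne_zero_s17 hq2
  set g : ℕ × ℕ → ℂ := fun p =>
    q ^ ((p.1 + p.2) ^ 2 + p.2) / (qPoch (q ^ 2) p.1 * qPoch (q ^ 2) p.2) with hgdef
  have hc : (0 : ℝ) < 1 - ‖q ^ 2‖ := by linarith
  set φ : ℕ → ℝ := fun n => ‖q‖ ^ (n ^ 2) * ((1 - ‖q ^ 2‖)⁻¹) ^ n with hφ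
  have hφ0 : ∀ n, 0 ≤ φ n := by intro n; rw [hφ]; positivity
  have hSφ : Summable φ := by
    apply summable_pow_mul (norm_nonneg q) hq (by positivity) (fun n => n ^ 2)
    intro n
    have : (n + 1) ^ 2 = n ^ 2 + 2 * n + 1 := by ring
    omega
  have hgbound : ∀ p : ℕ × ℕ, ‖g p‖ ≤ φ p.1 * φ p.2 := by
    rintro ⟨n, k⟩
    simp only [hgdef]
    rw [norm_div, norm_pow, norm_mul]
    have hnum : ‖q‖ ^ ((n + k) ^ 2 + k) ≤ ‖q‖ ^ (n ^ 2) * ‖q‖ ^ (k ^ 2) := by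
      rw [← pow_add]
      apply pow_le_pow_of_le_one (norm_nonneg q) hq.le
      have h : (n + k) ^ 2 + k = n ^ 2 + k ^ 2 + (2 * (n * k) + k) := by ring
      rw [h]
      exact Nat.le_add_right _ _
    have hden : (1 - ‖q ^ 2‖) ^ n * (1 - ‖q ^ 2‖) ^ k ≤ ‖qPoch (q ^ 2) n‖ * ‖qPoch (q ^ 2) k‖ := by
      apply mul_le_mul (le_norm_qPoch hq2 n) (le_norm_qPoch hq2 k) (by positivity) (norm_nonneg _)
    calc ‖q‖ ^ ((n + k) ^ 2 + k) / (‖qPoch (q ^ 2) n‖ * ‖qPoch (q ^ 2) k‖)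
        ≤ (‖q‖ ^ (n ^ 2) * ‖q‖ ^ (k ^ 2)) / ((1 - ‖q ^ 2‖) ^ n * (1 - ‖q ^ 2‖) ^ k) :=
          div_le_div₀ (by positivity) hnum (by positivity) hden
      _ = φ n * φ k := by
          rw [hφ]
          rw [div_eq_mul_inv, mul_inv, ← inv_pow, ← inv_pow]
          ring
  have hSg : Summable g :=
    Summable.of_norm_bounded (hSφ.mul_of_nonneg hSφ hφ0 hφ0) hgbound
  have h1 : ∑' m : ℕ, q ^ (m ^ 2) / qPoch q m = ∑' p : ℕ × ℕ, g p := by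
    have hstep : ∑' p : ℕ × ℕ, g p = ∑' N : ℕ, ∑ p ∈ Finset.HasAntidiagonal.antidiagonal N, g p := by
      rw [← Equiv.tsum_eq (Finset.HasAntidiagonal.sigmaAntidiagonalEquivProd (A := ℕ)) g]
      have hs : Summable (fun x : (n : ℕ) × {p // p ∈ Finset.HasAntidiagonal.antidiagonal n} =>
          g (Finset.HasAntidiagonal.sigmaAntidiagonalEquivProd x)) :=
        (Equiv.summable_iff (Finset.HasAntidiagonal.sigmaAntidiagonalEquivProd (A := ℕ))).2 hSg
      rw [Summable.tsum_sigma hs]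
      exact tsum_congr fun N => Finset.tsum_subtype _ g
    rw [hstep]
    apply tsum_congr
    intro N
    rw [Finset.Nat.sum_antidiagonal_eq_sum_range_succ_mk]
    have hterm : ∀ k ∈ Finset.range (N + 1),
        g (k, N - k) = q ^ (N ^ 2) * (q ^ (N - k) / (qPoch (q ^ 2) k * qPoch (q ^ 2) (N - k))) := by
      intro k hk
      rw [Finset.mem_range] at hk
      simp only [hgdef]
      have e1 : k + (N - k) = N := by omega
      rw [e1, pow_add, mul_div_assoc]
    rw [Finset.sum_congr rfl hterm, ← Finset.mul_sum, dagger' hq N, mul_one_div]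
  have h2 : ∑' p : ℕ × ℕ, g p =
      (∏' k : ℕ, (1 + q ^ 2 * (q ^ 2) ^ k)) * ∑' m : ℕ, q ^ (m ^ 2) / qPoch (q ^ 4) m := by
    rw [Summable.tsum_prod' hSg (fun b => hSg.prod_factor b)]
    have inner : ∀ n : ℕ, ∑' k : ℕ, g (n, k)
        = q ^ (n ^ 2) / qPoch (q ^ 2) n * ∏' j : ℕ, (1 + q ^ (2 * n + 2) * (q ^ 2) ^ j) := by
      intro n
      have hzn : ‖q ^ (2 * n + 2)‖ < 1 := by
        rw [norm_pow]; exact pow_lt_one₀ (norm_nonneg q) hq (by omega)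
      have hterm : ∀ k : ℕ, g (n, k) = (q ^ (n ^ 2) / qPoch (q ^ 2) n) *
          ((q ^ 2) ^ tri k * (q ^ (2 * n + 2)) ^ k / qPoch (q ^ 2) k) := by
        intro k
        simp only [hgdef]
        have hexp : (n + k) ^ 2 + k = n ^ 2 + (2 * tri k + (2 * n + 2) * k) := by
          calc (n + k) ^ 2 + k = n ^ 2 + (2 * (n * k) + (k * k + k)) := by ring
            _ = n ^ 2 + (2 * (n * k) + (2 * tri k + 2 * k)) := by rw [← two_tri k]
            _ = n ^ 2 + (2 * tri k + (2 * n + 2) * k) := by ring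
        rw [hexp, pow_add, pow_add, ← pow_mul, ← pow_mul, div_mul_div_comm]
      rw [tsum_congr hterm, tsum_mul_left, ← euler hq2 hzn]
    rw [tsum_congr inner, ← tsum_mul_left]
    apply tsum_congr
    intro n
    have hzz : q ^ 2 * (q ^ 2) ^ n = q ^ (2 * n + 2) := by
      rw [← pow_mul, ← pow_add]
      congr 1
      omega
    have hshift := tprod_shift hq2 hq2 n
    rw [hzz] at hshift
    have hq4poch : qPoch (q ^ 4) n
        = qPoch (q ^ 2) n * ∏ j ∈ Finset.range n, (1 + q ^ 2 * (q ^ 2) ^ j) := by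
      rw [qPoch, qPoch, ← Finset.prod_mul_distrib]
      apply Finset.prod_congr rfl
      intro j _
      have h4 : (q ^ 4 : ℂ) = (q ^ 2) ^ 2 := by ring
      rw [h4]
      ring
    have hprodne : ∏ j ∈ Finset.range n, (1 + q ^ 2 * (q ^ 2) ^ j) ≠ 0 := by
      apply Finset.prod_ne_zero_iff.mpr
      intro j _
      exact one_add_zt_ne_zero hq2 hq2 j
    rw [hshift, hq4poch]
    have hn := hP2 n
    field_simp
  rw [h1, h2]
end
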